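/- arXiv:1812.05967 — 6 statements merged into one kernel-verified Lean document; each statement's English description precedes it below -/
import Mathlib

section
/- Discrete Gaussian Poincaré inequality: given interface values (M*_{j+1/2})_{j∈J*} satisfying M*_{L+1/2} = M*_{-L+1/2} = 0, M_j := (M*_{j-1/2} - M*_{j+1/2})/(v_j Δv_j) > 0, and Σ_j M_j Δv_j = 1 with the symmetry M*_{j+1/2} = M*_{-j+1/2}, then for every f = (f_j)_{j∈J} one has Σ_j |f_j - ρ M_j|² γ_j Δv_j ≤ Σ_{j∈J*} |(f_{j+1}/M_{j+1} - f_j/M_j)/Δv_{j+1/2}|² M*_{j+1/2} Δv_{j+1/2}, where ρ = Σ_j f_j Δv_j and γ_j = 1/M_j. -/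
open Finset

lemma dgp_Ioc_consec (f : ℤ → ℝ) {a b c : ℤ} (h1 : a ≤ b) (h2 : b ≤ c) :
    ∑ j ∈ Finset.Ioc a b, f j + ∑ j ∈ Finset.Ioc b c, f j = ∑ j ∈ Finset.Ioc a c, f j := by
  rw [← Finset.sum_union (Finset.disjoint_left.mpr (fun x hx hx' => by
    simp [Finset.mem_Ioc] at hx hx'; omega)), Finset.Ioc_union_Ioc_eq_Ioc h1 h2]

lemma dgp_ins (a b : ℤ) (hab : a ≤ b) :
    Finset.Ioc a (b + 1) = insert (b + 1) (Finset.Ioc a b) := by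
  ext x; simp only [Finset.mem_Ioc, Finset.mem_insert]; omega

lemma dgp_tele1 (G : ℤ → ℝ) (a : ℤ) : ∀ b, a ≤ b →
    ∑ j ∈ Finset.Ioc a b, (G (j - 1) - G j) = G a - G b := by
  refine Int.le_induction ?_ ?_
  · simp
  · intro b hb ih
    rw [dgp_ins a b hb, Finset.sum_insert (by simp [Finset.mem_Ioc]), ih]
    have : b + 1 - 1 = b := by ring
    rw [this]; ring

lemma dgp_tele2 (v : ℤ → ℝ) (a : ℤ) : ∀ b, a ≤ b →
    ∑ i ∈ Finset.Ioc a b, (v (i + 1) - v i) = v (b + 1) - v (a + 1) := by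
  refine Int.le_induction ?_ ?_
  · simp
  · intro b hb ih
    rw [dgp_ins a b hb, Finset.sum_insert (by simp [Finset.mem_Ioc]), ih]
    ring

lemma dgp_icc_ioc (a b : ℤ) : Finset.Icc (a + 1) b = Finset.Ioc a b := by
  ext x; simp only [Finset.mem_Icc, Finset.mem_Ioc]; omega

lemma dgp_core (N : ℤ) (hN : 1 ≤ N) (μ v h Ms Δvd : ℤ → ℝ)
    (hμ : ∀ j ∈ Finset.Ioc (-N) N, 0 < μ j)
    (hvpos : ∀ j, 0 < j → j ≤ N → 0 < v j)
    (hvneg : ∀ j, -N < j → j ≤ 0 → v j < 0)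
    (hrec : ∀ j ∈ Finset.Ioc (-N) N, μ j * v j = Ms (j - 1) - Ms j)
    (hMsL : Ms N = 0) (hMsnL : Ms (-N) = 0)
    (hD : ∀ i ∈ Finset.Ioc (-N) (N - 1), Δvd i = v (i + 1) - v i)
    (hDpos : ∀ i ∈ Finset.Ioc (-N) (N - 1), 0 < Δvd i)
    (hv01 : v 0 = -v 1)
    (hmean : ∑ j ∈ Finset.Ioc (-N) N, μ j * h j = 0) :
    ∑ j ∈ Finset.Ioc (-N) N, μ j * h j ^ 2 ≤
      ∑ i ∈ Finset.Ioc (-N) (N - 1), (h (i + 1) - h i) ^ 2 * Ms i / Δvd i := by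
  -- the partial-mass function
  set S : ℤ → ℝ := fun i => ∑ j ∈ Finset.Ioc (-N) i, μ j * h j with hSdef
  -- right tail representation of Ms
  have hMsR : ∀ i, -N ≤ i → i ≤ N → ∑ j ∈ Finset.Ioc i N, μ j * v j = Ms i := by
    intro i h1 h2
    have e1 : ∑ j ∈ Finset.Ioc i N, μ j * v j
        = ∑ j ∈ Finset.Ioc i N, (Ms (j - 1) - Ms j) := by
      refine Finset.sum_congr rfl (fun j hj => ?_)
      obtain ⟨hj1, hj2⟩ := Finset.mem_Ioc.mp hj
      exact hrec j (Finset.mem_Ioc.mpr ⟨by omega, hj2⟩)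
    rw [e1, dgp_tele1 Ms i N h2, hMsL, sub_zero]
  -- left representation of Ms
  have hMsLrep : ∀ i, -N ≤ i → i ≤ N → ∑ j ∈ Finset.Ioc (-N) i, (μ j * (-v j)) = Ms i := by
    intro i h1 h2
    have e1 : ∑ j ∈ Finset.Ioc (-N) i, (μ j * (-v j))
        = ∑ j ∈ Finset.Ioc (-N) i, ((fun x => -Ms x) (j - 1) - (fun x => -Ms x) j) := by
      refine Finset.sum_congr rfl (fun j hj => ?_)
      obtain ⟨hj1, hj2⟩ := Finset.mem_Ioc.mp hj
      have := hrec j (Finset.mem_Ioc.mpr ⟨hj1, by omega⟩)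
      show μ j * -v j = -Ms (j - 1) - -Ms j
      linarith
    rw [e1, dgp_tele1 (fun x => -Ms x) (-N) i h1]
    simp [hMsnL]
  -- interior positivity of Ms
  have hMspos : ∀ i, -N < i → i ≤ N - 1 → 0 < Ms i := by
    intro i h1 h2
    rcases le_or_gt i 0 with hi | hi
    · rw [← hMsLrep i (by omega) (by omega)]
      apply Finset.sum_pos
      · intro j hj
        obtain ⟨hj1, hj2⟩ := Finset.mem_Ioc.mp hj
        have hv := hvneg j hj1 (by omega)
        exact mul_pos (hμ j (Finset.mem_Ioc.mpr ⟨hj1, by omega⟩)) (by linarith)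
      · exact ⟨i, Finset.mem_Ioc.mpr ⟨h1, le_refl i⟩⟩
    · rw [← hMsR i (by omega) (by omega)]
      apply Finset.sum_pos
      · intro j hj
        obtain ⟨hj1, hj2⟩ := Finset.mem_Ioc.mp hj
        exact mul_pos (hμ j (Finset.mem_Ioc.mpr ⟨by omega, hj2⟩)) (hvpos j (by omega) hj2)
      · exact ⟨N, Finset.mem_Ioc.mpr ⟨by omega, le_refl N⟩⟩
  have hS_nN : S (-N) = 0 := by simp [hSdef]
  have hS_N : S N = 0 := by simp only [hSdef]; exact hmean
  have hStail : ∀ i, -N ≤ i → i ≤ N → S i = - ∑ j ∈ Finset.Ioc i N, μ j * h j := by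
    intro i h1 h2
    have hc := dgp_Ioc_consec (fun j => μ j * h j) h1 h2
    simp only [hSdef]
    linarith [hmean]
  have hstep : ∀ j, -N ≤ j - 1 → S j = S (j - 1) + μ j * h j := by
    intro j h1
    have hc := dgp_Ioc_consec (fun k => μ k * h k) h1 (by omega : j - 1 ≤ j)
    have hsing : Finset.Ioc (j - 1) j = {j} := by
      ext x; simp only [Finset.mem_Ioc, Finset.mem_singleton]; omega
    simp only [hSdef]
    rw [← hc, hsing, Finset.sum_singleton]
  -- Abel summation
  have habel : ∑ j ∈ Finset.Ioc (-N) N, μ j * h j ^ 2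
      = - ∑ i ∈ Finset.Ioc (-N) (N - 1), S i * (h (i + 1) - h i) := by
    have e1 : ∑ j ∈ Finset.Ioc (-N) N, μ j * h j ^ 2
        = ∑ j ∈ Finset.Ioc (-N) N, (S j * h j - S (j - 1) * h j) := by
      refine Finset.sum_congr rfl (fun j hj => ?_)
      obtain ⟨hj1, hj2⟩ := Finset.mem_Ioc.mp hj
      rw [hstep j (by omega)]; ring
    rw [e1, Finset.sum_sub_distrib]
    have e2 : ∑ j ∈ Finset.Ioc (-N) N, S (j - 1) * h j
        = ∑ i ∈ Finset.Ioc (-N - 1) (N - 1), S i * h (i + 1) := by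
      refine Finset.sum_nbij' (fun j => j - 1) (fun i => i + 1) ?_ ?_ ?_ ?_ ?_
      · intro a ha; simp only [Finset.mem_Ioc] at *; omega
      · intro a ha; simp only [Finset.mem_Ioc] at *; omega
      · intro a _; omega
      · intro a _; omega
      · intro a _
        have hx : a - 1 + 1 = a := by omega
        rw [hx]
    have e3 : Finset.Ioc (-N - 1) (N - 1) = insert (-N) (Finset.Ioc (-N) (N - 1)) := by
      ext x; simp only [Finset.mem_Ioc, Finset.mem_insert]; omega
    have e4 : Finset.Ioc (-N) N = insert N (Finset.Ioc (-N) (N - 1)) := by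
      ext x; simp only [Finset.mem_Ioc, Finset.mem_insert]; omega
    rw [e2, e3, Finset.sum_insert (by simp [Finset.mem_Ioc]), e4,
      Finset.sum_insert (by simp [Finset.mem_Ioc]), hS_N, hS_nN]
    have e5 : ∑ i ∈ Finset.Ioc (-N) (N - 1), S i * (h (i + 1) - h i)
        = ∑ i ∈ Finset.Ioc (-N) (N - 1), S i * h (i + 1)
          - ∑ i ∈ Finset.Ioc (-N) (N - 1), S i * h i := by
      rw [← Finset.sum_sub_distrib]
      exact Finset.sum_congr rfl (fun i _ => by ring)
    linarith [e5]
  -- global Cauchy-Schwarz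
  have hCS2 : (∑ i ∈ Finset.Ioc (-N) (N - 1), S i * (h (i + 1) - h i)) ^ 2
      ≤ (∑ i ∈ Finset.Ioc (-N) (N - 1), S i ^ 2 * Δvd i / Ms i)
        * (∑ i ∈ Finset.Ioc (-N) (N - 1), (h (i + 1) - h i) ^ 2 * Ms i / Δvd i) := by
    apply Finset.sum_sq_le_sum_mul_sum_of_sq_eq_mul
    · intro i hi
      obtain ⟨hi1, hi2⟩ := Finset.mem_Ioc.mp hi
      exact div_nonneg (mul_nonneg (sq_nonneg _) (hDpos i hi).le) (hMspos i hi1 hi2).le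
    · intro i hi
      obtain ⟨hi1, hi2⟩ := Finset.mem_Ioc.mp hi
      exact div_nonneg (mul_nonneg (sq_nonneg _) (hMspos i hi1 hi2).le) (hDpos i hi).le
    · intro i hi
      obtain ⟨hi1, hi2⟩ := Finset.mem_Ioc.mp hi
      have h1 : Ms i ≠ 0 := (hMspos i hi1 hi2).ne'
      have h2 : Δvd i ≠ 0 := (hDpos i hi).ne'
      field_simp
  -- pointwise Hardy bounds
  have hbr : ∀ i ∈ Finset.Ioc (0 : ℤ) (N - 1), S i ^ 2 * Δvd i / Ms i
      ≤ Δvd i * ∑ j ∈ Finset.Ioc i N, μ j * h j ^ 2 / v j := by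
    intro i hi
    obtain ⟨hi1, hi2⟩ := Finset.mem_Ioc.mp hi
    have hMsi := hMspos i (by omega) hi2
    have hDi := hDpos i (Finset.mem_Ioc.mpr ⟨by omega, hi2⟩)
    have hg : ∀ j ∈ Finset.Ioc i N, 0 < μ j * v j := by
      intro j hj
      obtain ⟨hj1, hj2⟩ := Finset.mem_Ioc.mp hj
      exact mul_pos (hμ j (Finset.mem_Ioc.mpr ⟨by omega, hj2⟩)) (hvpos j (by omega) hj2)
    have hcs := Finset.sq_sum_div_le_sum_sq_div (Finset.Ioc i N) (fun j => μ j * h j) hg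
    rw [hMsR i (by omega) (by omega)] at hcs
    have hre : ∑ j ∈ Finset.Ioc i N, (μ j * h j) ^ 2 / (μ j * v j)
        = ∑ j ∈ Finset.Ioc i N, μ j * h j ^ 2 / v j := by
      refine Finset.sum_congr rfl (fun j hj => ?_)
      obtain ⟨hj1, hj2⟩ := Finset.mem_Ioc.mp hj
      have hμj : μ j ≠ 0 := (hμ j (Finset.mem_Ioc.mpr ⟨by omega, hj2⟩)).ne'
      have hvj : v j ≠ 0 := (hvpos j (by omega) hj2).ne'
      field_simp
    rw [hre] at hcs
    have hS2 : S i ^ 2 = (∑ j ∈ Finset.Ioc i N, μ j * h j) ^ 2 := by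
      rw [hStail i (by omega) (by omega)]; ring
    have e : S i ^ 2 * Δvd i / Ms i = Δvd i * (S i ^ 2 / Ms i) := by ring
    rw [e]
    apply mul_le_mul_of_nonneg_left _ hDi.le
    rw [hS2]
    exact hcs
  have hbl : ∀ i ∈ Finset.Ioc (-N) (-1 : ℤ), S i ^ 2 * Δvd i / Ms i
      ≤ Δvd i * ∑ j ∈ Finset.Ioc (-N) i, μ j * h j ^ 2 / (-v j) := by
    intro i hi
    obtain ⟨hi1, hi2⟩ := Finset.mem_Ioc.mp hi
    have hMsi := hMspos i (by omega) (by omega)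
    have hDi := hDpos i (Finset.mem_Ioc.mpr ⟨by omega, by omega⟩)
    have hg : ∀ j ∈ Finset.Ioc (-N) i, 0 < μ j * (-v j) := by
      intro j hj
      obtain ⟨hj1, hj2⟩ := Finset.mem_Ioc.mp hj
      have := hvneg j hj1 (by omega)
      exact mul_pos (hμ j (Finset.mem_Ioc.mpr ⟨hj1, by omega⟩)) (by linarith)
    have hcs := Finset.sq_sum_div_le_sum_sq_div (Finset.Ioc (-N) i) (fun j => μ j * h j) hg
    rw [hMsLrep i (by omega) (by omega)] at hcs
    have hre : ∑ j ∈ Finset.Ioc (-N) i, (μ j * h j) ^ 2 / (μ j * (-v j))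
        = ∑ j ∈ Finset.Ioc (-N) i, μ j * h j ^ 2 / (-v j) := by
      refine Finset.sum_congr rfl (fun j hj => ?_)
      obtain ⟨hj1, hj2⟩ := Finset.mem_Ioc.mp hj
      have hμj : μ j ≠ 0 := (hμ j (Finset.mem_Ioc.mpr ⟨hj1, by omega⟩)).ne'
      have hvj : v j ≠ 0 := (hvneg j hj1 (by omega)).ne
      field_simp
    rw [hre] at hcs
    have e : S i ^ 2 * Δvd i / Ms i = Δvd i * (S i ^ 2 / Ms i) := by ring
    rw [e]
    apply mul_le_mul_of_nonneg_left _ hDi.le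
    have hSi : S i = ∑ j ∈ Finset.Ioc (-N) i, μ j * h j := by simp only [hSdef]
    rw [hSi]
    exact hcs
  have hb0 : S 0 ^ 2 * Δvd 0 / Ms 0
      ≤ v 1 * ((∑ j ∈ Finset.Ioc (-N) (0 : ℤ), μ j * h j ^ 2 / (-v j))
          + ∑ j ∈ Finset.Ioc (0 : ℤ) N, μ j * h j ^ 2 / v j) := by
    have h0I : (0 : ℤ) ∈ Finset.Ioc (-N) (N - 1) := Finset.mem_Ioc.mpr ⟨by omega, by omega⟩
    have hMs0 := hMspos 0 (by omega) (by omega)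
    have hv1 : 0 < v 1 := hvpos 1 one_pos hN
    have hD0 : Δvd 0 = 2 * v 1 := by
      rw [hD 0 h0I]
      have e0 : (0 : ℤ) + 1 = 1 := by norm_num
      rw [e0, hv01]; ring
    -- left CS at 0
    have hgL : ∀ j ∈ Finset.Ioc (-N) (0 : ℤ), 0 < μ j * (-v j) := by
      intro j hj
      obtain ⟨hj1, hj2⟩ := Finset.mem_Ioc.mp hj
      have := hvneg j hj1 hj2
      exact mul_pos (hμ j (Finset.mem_Ioc.mpr ⟨hj1, by omega⟩)) (by linarith)
    have hcsL := Finset.sq_sum_div_le_sum_sq_div (Finset.Ioc (-N) (0 : ℤ)) (fun j => μ j * h j) hgL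
    rw [hMsLrep 0 (by omega) (by omega)] at hcsL
    have hreL : ∑ j ∈ Finset.Ioc (-N) (0 : ℤ), (μ j * h j) ^ 2 / (μ j * (-v j))
        = ∑ j ∈ Finset.Ioc (-N) (0 : ℤ), μ j * h j ^ 2 / (-v j) := by
      refine Finset.sum_congr rfl (fun j hj => ?_)
      obtain ⟨hj1, hj2⟩ := Finset.mem_Ioc.mp hj
      have hμj : μ j ≠ 0 := (hμ j (Finset.mem_Ioc.mpr ⟨hj1, by omega⟩)).ne'
      have hvj : v j ≠ 0 := (hvneg j hj1 hj2).ne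
      field_simp
    rw [hreL] at hcsL
    -- right CS at 0
    have hgR : ∀ j ∈ Finset.Ioc (0 : ℤ) N, 0 < μ j * v j := by
      intro j hj
      obtain ⟨hj1, hj2⟩ := Finset.mem_Ioc.mp hj
      exact mul_pos (hμ j (Finset.mem_Ioc.mpr ⟨by omega, hj2⟩)) (hvpos j hj1 hj2)
    have hcsR := Finset.sq_sum_div_le_sum_sq_div (Finset.Ioc (0 : ℤ) N) (fun j => μ j * h j) hgR
    rw [hMsR 0 (by omega) (by omega)] at hcsR
    have hreR : ∑ j ∈ Finset.Ioc (0 : ℤ) N, (μ j * h j) ^ 2 / (μ j * v j)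
        = ∑ j ∈ Finset.Ioc (0 : ℤ) N, μ j * h j ^ 2 / v j := by
      refine Finset.sum_congr rfl (fun j hj => ?_)
      obtain ⟨hj1, hj2⟩ := Finset.mem_Ioc.mp hj
      have hμj : μ j ≠ 0 := (hμ j (Finset.mem_Ioc.mpr ⟨by omega, hj2⟩)).ne'
      have hvj : v j ≠ 0 := (hvpos j hj1 hj2).ne'
      field_simp
    rw [hreR] at hcsR
    have hSL : S 0 ^ 2 = (∑ j ∈ Finset.Ioc (-N) (0 : ℤ), μ j * h j) ^ 2 := by
      simp only [hSdef]
    have hSR : S 0 ^ 2 = (∑ j ∈ Finset.Ioc (0 : ℤ) N, μ j * h j) ^ 2 := by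
      rw [hStail 0 (by omega) (by omega)]; ring
    have hL' : S 0 ^ 2 / Ms 0 ≤ ∑ j ∈ Finset.Ioc (-N) (0 : ℤ), μ j * h j ^ 2 / (-v j) := by
      rw [hSL]; exact hcsL
    have hR' : S 0 ^ 2 / Ms 0 ≤ ∑ j ∈ Finset.Ioc (0 : ℤ) N, μ j * h j ^ 2 / v j := by
      rw [hSR]; exact hcsR
    have e : S 0 ^ 2 * Δvd 0 / Ms 0 = v 1 * (S 0 ^ 2 / Ms 0 + S 0 ^ 2 / Ms 0) := by
      rw [hD0]; ring
    rw [e]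
    exact mul_le_mul_of_nonneg_left (add_le_add hL' hR') hv1.le
  -- right part resummation
  have hRP : ∑ i ∈ Finset.Ioc (0 : ℤ) (N - 1), (Δvd i * ∑ j ∈ Finset.Ioc i N, μ j * h j ^ 2 / v j)
      + v 1 * ∑ j ∈ Finset.Ioc (0 : ℤ) N, μ j * h j ^ 2 / v j
      = ∑ j ∈ Finset.Ioc (0 : ℤ) N, μ j * h j ^ 2 := by
    have hv1 : 0 < v 1 := hvpos 1 one_pos hN
    have s1 : ∑ i ∈ Finset.Ioc (0 : ℤ) (N - 1), (Δvd i * ∑ j ∈ Finset.Ioc i N, μ j * h j ^ 2 / v j)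
        = ∑ j ∈ Finset.Ioc (1 : ℤ) N, (v j - v 1) * (μ j * h j ^ 2 / v j) := by
      have s1a : ∑ i ∈ Finset.Ioc (0 : ℤ) (N - 1), (Δvd i * ∑ j ∈ Finset.Ioc i N, μ j * h j ^ 2 / v j)
          = ∑ i ∈ Finset.Ioc (0 : ℤ) (N - 1), ∑ j ∈ Finset.Ioc i N, Δvd i * (μ j * h j ^ 2 / v j) :=
        Finset.sum_congr rfl (fun i _ => Finset.mul_sum _ _ _)
      rw [s1a]
      rw [Finset.sum_comm' (t' := Finset.Ioc (1 : ℤ) N) (s' := fun j => Finset.Ioc (0 : ℤ) (j - 1))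
        (fun x y => by simp only [Finset.mem_Ioc]; omega)]
      refine Finset.sum_congr rfl (fun j hj => ?_)
      obtain ⟨hj1, hj2⟩ := Finset.mem_Ioc.mp hj
      rw [← Finset.sum_mul]
      congr 1
      have e1 : ∑ i ∈ Finset.Ioc (0 : ℤ) (j - 1), Δvd i
          = ∑ i ∈ Finset.Ioc (0 : ℤ) (j - 1), (v (i + 1) - v i) := by
        refine Finset.sum_congr rfl (fun i hi => ?_)
        obtain ⟨hi1, hi2⟩ := Finset.mem_Ioc.mp hi
        exact hD i (Finset.mem_Ioc.mpr ⟨by omega, by omega⟩)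
      rw [e1, dgp_tele2 v 0 (j - 1) (by omega)]
      have e2 : j - 1 + 1 = j := by omega
      have e3 : (0 : ℤ) + 1 = 1 := by norm_num
      rw [e2, e3]
    have hsing : Finset.Ioc (0 : ℤ) 1 = {1} := by
      ext x; simp only [Finset.mem_Ioc, Finset.mem_singleton]; omega
    have s2 := dgp_Ioc_consec (fun j => μ j * h j ^ 2 / v j) (show (0 : ℤ) ≤ 1 by omega) hN
    rw [hsing, Finset.sum_singleton] at s2
    have s3 := dgp_Ioc_consec (fun j => μ j * h j ^ 2) (show (0 : ℤ) ≤ 1 by omega) hN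
    rw [hsing, Finset.sum_singleton] at s3
    have s4 : ∑ j ∈ Finset.Ioc (1 : ℤ) N, ((v j - v 1) * (μ j * h j ^ 2 / v j)
        + v 1 * (μ j * h j ^ 2 / v j)) = ∑ j ∈ Finset.Ioc (1 : ℤ) N, μ j * h j ^ 2 := by
      refine Finset.sum_congr rfl (fun j hj => ?_)
      obtain ⟨hj1, hj2⟩ := Finset.mem_Ioc.mp hj
      have hvj : v j ≠ 0 := (hvpos j (by omega) hj2).ne'
      field_simp
      ring
    rw [Finset.sum_add_distrib] at s4
    have s5 : v 1 * (μ 1 * h 1 ^ 2 / v 1) = μ 1 * h 1 ^ 2 := by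
      field_simp
    rw [s1, ← s2, ← s3, mul_add, s5, Finset.mul_sum]
    linarith [s4]
  -- left part resummation
  have hLP : ∑ i ∈ Finset.Ioc (-N) (-1 : ℤ), (Δvd i * ∑ j ∈ Finset.Ioc (-N) i, μ j * h j ^ 2 / (-v j))
      + v 1 * ∑ j ∈ Finset.Ioc (-N) (0 : ℤ), μ j * h j ^ 2 / (-v j)
      = ∑ j ∈ Finset.Ioc (-N) (0 : ℤ), μ j * h j ^ 2 := by
    have hv1 : 0 < v 1 := hvpos 1 one_pos hN
    have s1 : ∑ i ∈ Finset.Ioc (-N) (-1 : ℤ), (Δvd i * ∑ j ∈ Finset.Ioc (-N) i, μ j * h j ^ 2 / (-v j))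
        = ∑ j ∈ Finset.Ioc (-N) (-1 : ℤ), (v 0 - v j) * (μ j * h j ^ 2 / (-v j)) := by
      have s1a : ∑ i ∈ Finset.Ioc (-N) (-1 : ℤ), (Δvd i * ∑ j ∈ Finset.Ioc (-N) i, μ j * h j ^ 2 / (-v j))
          = ∑ i ∈ Finset.Ioc (-N) (-1 : ℤ), ∑ j ∈ Finset.Ioc (-N) i, Δvd i * (μ j * h j ^ 2 / (-v j)) :=
        Finset.sum_congr rfl (fun i _ => Finset.mul_sum _ _ _)
      rw [s1a]
      rw [Finset.sum_comm' (t' := Finset.Ioc (-N) (-1 : ℤ)) (s' := fun j => Finset.Ioc (j - 1) (-1 : ℤ))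
        (fun x y => by simp only [Finset.mem_Ioc]; omega)]
      refine Finset.sum_congr rfl (fun j hj => ?_)
      obtain ⟨hj1, hj2⟩ := Finset.mem_Ioc.mp hj
      rw [← Finset.sum_mul]
      congr 1
      have e1 : ∑ i ∈ Finset.Ioc (j - 1) (-1 : ℤ), Δvd i
          = ∑ i ∈ Finset.Ioc (j - 1) (-1 : ℤ), (v (i + 1) - v i) := by
        refine Finset.sum_congr rfl (fun i hi => ?_)
        obtain ⟨hi1, hi2⟩ := Finset.mem_Ioc.mp hi
        exact hD i (Finset.mem_Ioc.mpr ⟨by omega, by omega⟩)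
      rw [e1, dgp_tele2 v (j - 1) (-1) (by omega)]
      have e2 : j - 1 + 1 = j := by omega
      have e3 : (-1 : ℤ) + 1 = 0 := by norm_num
      rw [e2, e3]
    have hsing : Finset.Ioc (-1 : ℤ) 0 = {(0 : ℤ)} := by
      ext x; simp only [Finset.mem_Ioc, Finset.mem_singleton]; omega
    have s2 := dgp_Ioc_consec (fun j => μ j * h j ^ 2 / (-v j)) (show -N ≤ -1 by omega)
      (show (-1 : ℤ) ≤ 0 by omega)
    rw [hsing, Finset.sum_singleton] at s2
    have s3 := dgp_Ioc_consec (fun j => μ j * h j ^ 2) (show -N ≤ -1 by omega)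
      (show (-1 : ℤ) ≤ 0 by omega)
    rw [hsing, Finset.sum_singleton] at s3
    have s4 : ∑ j ∈ Finset.Ioc (-N) (-1 : ℤ), ((v 0 - v j) * (μ j * h j ^ 2 / (-v j))
        + v 1 * (μ j * h j ^ 2 / (-v j))) = ∑ j ∈ Finset.Ioc (-N) (-1 : ℤ), μ j * h j ^ 2 := by
      refine Finset.sum_congr rfl (fun j hj => ?_)
      obtain ⟨hj1, hj2⟩ := Finset.mem_Ioc.mp hj
      have hvj : v j < 0 := hvneg j hj1 (by omega)
      have hvj' : v j ≠ 0 := hvj.ne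
      have e : (v 0 - v j) * (μ j * h j ^ 2 / (-v j)) + v 1 * (μ j * h j ^ 2 / (-v j))
          = μ j * h j ^ 2 / (-v j) * (-v j) := by rw [hv01]; ring
      rw [e, div_mul_cancel₀ _ (neg_ne_zero.mpr hvj')]
    rw [Finset.sum_add_distrib] at s4
    have hv0 : -v 0 = v 1 := by rw [hv01]; ring
    have s5 : v 1 * (μ 0 * h 0 ^ 2 / (-v 0)) = μ 0 * h 0 ^ 2 := by
      rw [hv0]; field_simp
    rw [s1, ← s2, ← s3, mul_add, s5, Finset.mul_sum]
    linarith [s4]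
  -- splitting of the index sets
  have hsing0 : Finset.Ioc (-1 : ℤ) 0 = {(0 : ℤ)} := by
    ext x; simp only [Finset.mem_Ioc, Finset.mem_singleton]; omega
  have hsplitI := dgp_Ioc_consec (fun i => S i ^ 2 * Δvd i / Ms i)
    (show -N ≤ 0 by omega) (show (0 : ℤ) ≤ N - 1 by omega)
  have hsplitI2 := dgp_Ioc_consec (fun i => S i ^ 2 * Δvd i / Ms i)
    (show -N ≤ -1 by omega) (show (-1 : ℤ) ≤ 0 by omega)
  rw [hsing0, Finset.sum_singleton] at hsplitI2
  have hsplitC := dgp_Ioc_consec (fun j => μ j * h j ^ 2)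
    (show -N ≤ 0 by omega) (show (0 : ℤ) ≤ N by omega)
  -- Hardy inequality
  have hhardy : ∑ i ∈ Finset.Ioc (-N) (N - 1), S i ^ 2 * Δvd i / Ms i
      ≤ ∑ j ∈ Finset.Ioc (-N) N, μ j * h j ^ 2 := by
    have hL1 := Finset.sum_le_sum hbl
    have hR1 := Finset.sum_le_sum hbr
    have e : v 1 * ((∑ j ∈ Finset.Ioc (-N) (0 : ℤ), μ j * h j ^ 2 / (-v j))
        + ∑ j ∈ Finset.Ioc (0 : ℤ) N, μ j * h j ^ 2 / v j)
        = v 1 * (∑ j ∈ Finset.Ioc (-N) (0 : ℤ), μ j * h j ^ 2 / (-v j))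
          + v 1 * ∑ j ∈ Finset.Ioc (0 : ℤ) N, μ j * h j ^ 2 / v j := by ring
    linarith [hb0, hL1, hR1, hLP, hRP, hsplitI, hsplitI2, hsplitC, e]
  -- conclusion
  have hXnn : 0 ≤ ∑ j ∈ Finset.Ioc (-N) N, μ j * h j ^ 2 :=
    Finset.sum_nonneg (fun j hj => mul_nonneg (hμ j hj).le (sq_nonneg _))
  have hRnn : 0 ≤ ∑ i ∈ Finset.Ioc (-N) (N - 1), (h (i + 1) - h i) ^ 2 * Ms i / Δvd i :=
    Finset.sum_nonneg (fun i hi => by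
      obtain ⟨hi1, hi2⟩ := Finset.mem_Ioc.mp hi
      exact div_nonneg (mul_nonneg (sq_nonneg _) (hMspos i hi1 hi2).le) (hDpos i hi).le)
  have key : (∑ j ∈ Finset.Ioc (-N) N, μ j * h j ^ 2) ^ 2
      ≤ (∑ j ∈ Finset.Ioc (-N) N, μ j * h j ^ 2)
        * ∑ i ∈ Finset.Ioc (-N) (N - 1), (h (i + 1) - h i) ^ 2 * Ms i / Δvd i := by
    have h1 : (∑ j ∈ Finset.Ioc (-N) N, μ j * h j ^ 2) ^ 2
        = (∑ i ∈ Finset.Ioc (-N) (N - 1), S i * (h (i + 1) - h i)) ^ 2 := by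
      rw [habel]; ring
    rw [h1]
    exact le_trans hCS2 (mul_le_mul_of_nonneg_right hhardy hRnn)
  rcases eq_or_lt_of_le hXnn with h0 | h0
  · rw [← h0]; exact hRnn
  · nlinarith [key, h0]

/-- Discrete Gaussian Poincaré inequality on a bounded symmetric velocity grid.
Interfaces are `w j = v_{j+1/2}` for `j ∈ J* = {-L,…,L}` (interface `j` of the
paper is `j+1/2`), cells `V_j = (w (j-1), w j)` with midpoints `v j` and widths
`Δv j`, dual widths `Δvd j = v (j+1) - v j`.  The interface Maxwellian `Mstar`
vanishes at the endpoints, is symmetric, and defines the cell Maxwellian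
`Mc j = (Mstar (j-1) - Mstar j)/(v j Δv j) > 0` of unit mass.  Then for every
`f`, with `ρ = Σ_j f_j Δv_j` and `γ_j = 1/Mc j`,
Σ_j |f_j - ρ Mc_j|² γ_j Δv_j ≤ Σ_{j∈J*} |(f_{j+1}/Mc_{j+1} - f_j/Mc_j)/Δvd_j|² Mstar_j Δvd_j. -/
theorem discrete_gaussian_poincare (L : ℕ) (hL : 1 ≤ L)
    (w : ℤ → ℝ)
    (hmono : ∀ j ∈ Finset.Icc (-(L : ℤ)) (L : ℤ), ∀ k ∈ Finset.Icc (-(L : ℤ)) (L : ℤ),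
        j < k → w j < w k)
    (hwsym : ∀ j, w j = - w (-j))
    (v : ℤ → ℝ) (hv : ∀ j, v j = (w (j - 1) + w j) / 2)
    (Δv : ℤ → ℝ) (hΔv : ∀ j, Δv j = w j - w (j - 1))
    (Δvd : ℤ → ℝ)
    (hΔvd : ∀ j ∈ Finset.Icc (-(L : ℤ) + 1) ((L : ℤ) - 1), Δvd j = v (j + 1) - v j)
    (hΔvdpos : ∀ j ∈ Finset.Icc (-(L : ℤ)) (L : ℤ), 0 < Δvd j)
    (Mstar : ℤ → ℝ)
    (hMb : Mstar (L : ℤ) = 0) (hMb' : Mstar (-(L : ℤ)) = 0)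
    (hMnn : ∀ j, 0 ≤ Mstar j)
    (hMssym : ∀ j, Mstar j = Mstar (-j))
    (Mc : ℤ → ℝ)
    (hMc : ∀ j ∈ Finset.Icc (-(L : ℤ) + 1) (L : ℤ),
        Mc j = (Mstar (j - 1) - Mstar j) / (v j * Δv j))
    (hMcpos : ∀ j ∈ Finset.Icc (-(L : ℤ) + 1) (L : ℤ), 0 < Mc j)
    (hmass : ∑ j ∈ Finset.Icc (-(L : ℤ) + 1) (L : ℤ), Mc j * Δv j = 1)
    (f : ℤ → ℝ) (ρ : ℝ)
    (hρ : ρ = ∑ j ∈ Finset.Icc (-(L : ℤ) + 1) (L : ℤ), f j * Δv j) :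
    ∑ j ∈ Finset.Icc (-(L : ℤ) + 1) (L : ℤ),
        (f j - ρ * Mc j) ^ 2 * (Mc j)⁻¹ * Δv j
      ≤ ∑ j ∈ Finset.Icc (-(L : ℤ)) (L : ℤ),
          ((f (j + 1) / Mc (j + 1) - f j / Mc j) / Δvd j) ^ 2 * Mstar j * Δvd j := by
  set N : ℤ := (L : ℤ) with hNdef
  have hN : 1 ≤ N := by rw [hNdef]; exact_mod_cast hL
  have hw0 : w 0 = 0 := by
    have := hwsym 0
    simp at this
    linarith
  have hΔvpos : ∀ j, -N < j → j ≤ N → 0 < Δv j := by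
    intro j h1 h2
    rw [hΔv j]
    have := hmono (j - 1) (Finset.mem_Icc.mpr ⟨by omega, by omega⟩) j
      (Finset.mem_Icc.mpr ⟨by omega, by omega⟩) (by omega)
    linarith
  have hvpos : ∀ j, 0 < j → j ≤ N → 0 < v j := by
    intro j h1 h2
    rw [hv j]
    have hwj : 0 < w j := by
      have := hmono 0 (Finset.mem_Icc.mpr ⟨by omega, by omega⟩) j
        (Finset.mem_Icc.mpr ⟨by omega, by omega⟩) h1
      rwa [hw0] at this
    have hwj1 : 0 ≤ w (j - 1) := by
      rcases eq_or_lt_of_le (show (0 : ℤ) ≤ j - 1 by omega) with he | hl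
      · rw [← he, hw0]
      · have := hmono 0 (Finset.mem_Icc.mpr ⟨by omega, by omega⟩) (j - 1)
          (Finset.mem_Icc.mpr ⟨by omega, by omega⟩) hl
        rw [hw0] at this
        linarith
    linarith
  have hvneg : ∀ j, -N < j → j ≤ 0 → v j < 0 := by
    intro j h1 h2
    rw [hv j]
    have hwj1 : w (j - 1) < 0 := by
      have := hmono (j - 1) (Finset.mem_Icc.mpr ⟨by omega, by omega⟩) 0
        (Finset.mem_Icc.mpr ⟨by omega, by omega⟩) (by omega)
      rwa [hw0] at this
    have hwj : w j ≤ 0 := by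
      rcases eq_or_lt_of_le h2 with he | hl
      · rw [he, hw0]
      · have := hmono j (Finset.mem_Icc.mpr ⟨by omega, by omega⟩) 0
          (Finset.mem_Icc.mpr ⟨by omega, by omega⟩) hl
        rw [hw0] at this
        linarith
    linarith
  have hvne : ∀ j, -N < j → j ≤ N → v j ≠ 0 := by
    intro j h1 h2
    rcases le_or_gt j 0 with hj | hj
    · exact (hvneg j h1 hj).ne
    · exact (hvpos j hj h2).ne'
  have hMcpos' : ∀ j, -N < j → j ≤ N → 0 < Mc j :=
    fun j h1 h2 => hMcpos j (Finset.mem_Icc.mpr ⟨by omega, h2⟩)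
  have hicc : ∀ b : ℤ, Finset.Icc (-N + 1) b = Finset.Ioc (-N) b := fun b => dgp_icc_ioc (-N) b
  -- core hypotheses
  have hμ : ∀ j ∈ Finset.Ioc (-N) N, 0 < Mc j * Δv j := by
    intro j hj
    obtain ⟨hj1, hj2⟩ := Finset.mem_Ioc.mp hj
    exact mul_pos (hMcpos' j hj1 hj2) (hΔvpos j hj1 hj2)
  have hrec : ∀ j ∈ Finset.Ioc (-N) N, (Mc j * Δv j) * v j = Mstar (j - 1) - Mstar j := by
    intro j hj
    obtain ⟨hj1, hj2⟩ := Finset.mem_Ioc.mp hj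
    rw [hMc j (Finset.mem_Icc.mpr ⟨by omega, hj2⟩)]
    have h1 : v j ≠ 0 := hvne j hj1 hj2
    have h2 : Δv j ≠ 0 := (hΔvpos j hj1 hj2).ne'
    field_simp
  have hD : ∀ i ∈ Finset.Ioc (-N) (N - 1), Δvd i = v (i + 1) - v i := by
    intro i hi
    exact hΔvd i (by rw [dgp_icc_ioc]; exact hi)
  have hDpos : ∀ i ∈ Finset.Ioc (-N) (N - 1), 0 < Δvd i := by
    intro i hi
    obtain ⟨hi1, hi2⟩ := Finset.mem_Ioc.mp hi
    exact hΔvdpos i (Finset.mem_Icc.mpr ⟨by omega, by omega⟩)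
  have hv01 : v 0 = -v 1 := by
    rw [hv 0, hv 1]
    have e1 : (0 : ℤ) - 1 = -1 := by norm_num
    have e2 : (1 : ℤ) - 1 = 0 := by norm_num
    rw [e1, e2, hw0]
    have := hwsym 1
    have e3 : -(1 : ℤ) = (-1 : ℤ) := by norm_num
    rw [e3] at this
    linarith
  have hmean : ∑ j ∈ Finset.Ioc (-N) N, (Mc j * Δv j) * (f j / Mc j - ρ) = 0 := by
    have e : ∀ j ∈ Finset.Ioc (-N) N,
        (Mc j * Δv j) * (f j / Mc j - ρ) = f j * Δv j - ρ * (Mc j * Δv j) := by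
      intro j hj
      obtain ⟨hj1, hj2⟩ := Finset.mem_Ioc.mp hj
      have h1 : Mc j ≠ 0 := (hMcpos' j hj1 hj2).ne'
      field_simp
    rw [Finset.sum_congr rfl e, Finset.sum_sub_distrib, ← Finset.mul_sum]
    rw [hicc N] at hρ hmass
    rw [hmass, ← hρ]
    ring
  have main := dgp_core N hN (fun j => Mc j * Δv j) v (fun j => f j / Mc j - ρ) Mstar Δvd
    hμ hvpos hvneg hrec hMb hMb' hD hDpos hv01 hmean
  -- identify left sides
  have eL : ∑ j ∈ Finset.Icc (-N + 1) N, (f j - ρ * Mc j) ^ 2 * (Mc j)⁻¹ * Δv j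
      = ∑ j ∈ Finset.Ioc (-N) N, (Mc j * Δv j) * (f j / Mc j - ρ) ^ 2 := by
    rw [hicc N]
    refine Finset.sum_congr rfl (fun j hj => ?_)
    obtain ⟨hj1, hj2⟩ := Finset.mem_Ioc.mp hj
    have h1 : Mc j ≠ 0 := (hMcpos' j hj1 hj2).ne'
    field_simp
  -- identify right sides
  have eR : ∑ j ∈ Finset.Icc (-N) N,
        ((f (j + 1) / Mc (j + 1) - f j / Mc j) / Δvd j) ^ 2 * Mstar j * Δvd j
      = ∑ i ∈ Finset.Ioc (-N) (N - 1),
          ((f (i + 1) / Mc (i + 1) - ρ) - (f i / Mc i - ρ)) ^ 2 * Mstar i / Δvd i := by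
    rw [← Finset.sum_subset (show Finset.Ioc (-N) (N - 1) ⊆ Finset.Icc (-N) N by
        intro x hx; obtain ⟨h1, h2⟩ := Finset.mem_Ioc.mp hx
        exact Finset.mem_Icc.mpr ⟨by omega, by omega⟩)
      (fun x hx hnx => ?_)]
    · refine Finset.sum_congr rfl (fun i hi => ?_)
      have hDi : Δvd i ≠ 0 := (hDpos i hi).ne'
      have e1 : (f (i + 1) / Mc (i + 1) - ρ) - (f i / Mc i - ρ)
          = f (i + 1) / Mc (i + 1) - f i / Mc i := by ring
      rw [e1]
      field_simp
    · obtain ⟨h1, h2⟩ := Finset.mem_Icc.mp hx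
      have : x = -N ∨ x = N := by
        simp only [Finset.mem_Ioc, not_and, not_le] at hnx
        omega
      rcases this with h | h
      · rw [h, hMb']; ring
      · rw [h, hMb]; ring
  rw [eL, eR]
  exact main
end

section
/- Discrete Poincaré inequality on the torus: for a uniform subdivision of the 1D torus of length 1 into N cells with N odd, there is a constant C_P = 1/(N |sin(π/N)|) such that any vector (φ_i)_{i∈ℤ/Nℤ} with Σ_i Δx φ_i = 0 satisfies Σ_i Δx φ_i² ≤ C_P² Σ_i Δx ((φ_{i+1} - φ_{i-1})/(2Δx))², where Δx = 1/N. -/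
open Finset Complex
open scoped Real

namespace DiscretePoincareAux

variable {N : ℕ} [NeZero N]

/-- Orthogonality of characters. -/
lemma char_orth (t : ZMod N) :
    ∑ k : ZMod N, ZMod.stdAddChar (t * k) = if t = 0 then (N : ℂ) else 0 := by
  split_ifs with h
  · simp [h]
  · simpa [AddChar.mulShift_apply] using
      AddChar.sum_eq_zero_of_ne_one (ZMod.isPrimitive_stdAddChar N h)

lemma conj_stdAddChar (j : ZMod N) :
    (starRingEnd ℂ) (ZMod.stdAddChar j) = ZMod.stdAddChar (-j) := by
  rw [ZMod.stdAddChar_apply, ZMod.stdAddChar_apply, AddChar.map_neg_eq_inv,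
    Circle.coe_inv_eq_conj]

/-- Discrete Parseval identity. -/
lemma parseval (Φ : ZMod N → ℂ) :
    ∑ k : ZMod N, Complex.normSq (ZMod.dft Φ k)
      = N * ∑ j : ZMod N, Complex.normSq (Φ j) := by
  have key : ∑ k : ZMod N, (ZMod.dft Φ k * (starRingEnd ℂ) (ZMod.dft Φ k))
      = (N : ℂ) * ∑ j : ZMod N, (Φ j * (starRingEnd ℂ) (Φ j)) := by
    have expand : ∀ k : ZMod N, ZMod.dft Φ k * (starRingEnd ℂ) (ZMod.dft Φ k)
        = ∑ j : ZMod N, ∑ l : ZMod N,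
            ZMod.stdAddChar ((l - j) * k) * (Φ j * (starRingEnd ℂ) (Φ l)) := by
      intro k
      rw [ZMod.dft_apply, map_sum, sum_mul]
      refine Finset.sum_congr rfl fun j _ => ?_
      rw [mul_sum]
      refine Finset.sum_congr rfl fun l _ => ?_
      simp only [smul_eq_mul, map_mul, conj_stdAddChar, neg_neg]
      rw [show ZMod.stdAddChar ((l - j) * k)
          = ZMod.stdAddChar (-(j * k)) * ZMod.stdAddChar (l * k) by
        rw [← AddChar.map_add_eq_mul]; ring_nf]
      ring
    simp only [expand]
    rw [Finset.sum_comm]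
    refine Eq.trans (Finset.sum_congr rfl fun j _ => Finset.sum_comm) ?_
    have inner : ∀ j l : ZMod N,
        ∑ k : ZMod N, ZMod.stdAddChar ((l - j) * k) * (Φ j * (starRingEnd ℂ) (Φ l))
          = (if l = j then (N : ℂ) else 0) * (Φ j * (starRingEnd ℂ) (Φ l)) := by
      intro j l
      rw [← Finset.sum_mul, char_orth]; simp [sub_eq_zero]
    simp only [inner, ite_mul, zero_mul]
    rw [mul_sum]
    refine Finset.sum_congr rfl fun j _ => ?_
    simp
  simp only [Complex.mul_conj] at key
  exact_mod_cast key

/-- Shift property of the DFT. -/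
lemma dft_shift (Φ : ZMod N → ℂ) (c k : ZMod N) :
    ZMod.dft (fun j => Φ (j + c)) k = ZMod.stdAddChar (c * k) * ZMod.dft Φ k := by
  rw [ZMod.dft_apply, ZMod.dft_apply, mul_sum]
  refine Fintype.sum_equiv (Equiv.addRight c) _ _ fun j => ?_
  simp only [Equiv.coe_addRight, smul_eq_mul]
  rw [show ZMod.stdAddChar (c * k) * (ZMod.stdAddChar (-((j + c) * k)) * Φ (j + c))
      = (ZMod.stdAddChar (c * k) * ZMod.stdAddChar (-((j + c) * k))) * Φ (j + c) by ring,
    ← AddChar.map_add_eq_mul]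
  ring_nf

lemma stdAddChar_eq_exp (k : ZMod N) :
    ZMod.stdAddChar k = Complex.exp ((2 * π * k.val / N : ℝ) * I) := by
  conv_lhs => rw [← ZMod.natCast_zmod_val k]
  rw [show ((k.val : ℕ) : ZMod N) = ((k.val : ℤ) : ZMod N) by push_cast; rfl,
    ZMod.stdAddChar_coe]
  congr 1
  push_cast
  ring

lemma normSq_char_sub (k : ZMod N) :
    Complex.normSq (ZMod.stdAddChar k - ZMod.stdAddChar (-k))
      = 4 * Real.sin (2 * π * k.val / N) ^ 2 := by
  rw [← conj_stdAddChar, Complex.sub_conj, stdAddChar_eq_exp, Complex.exp_ofReal_mul_I_im]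
  rw [Complex.normSq_mul, Complex.normSq_I, Complex.normSq_ofReal]
  ring

lemma dft_grad (φ : ZMod N → ℝ) (k : ZMod N) :
    ZMod.dft (fun j => (((φ (j + 1) - φ (j - 1)) * ((N : ℝ) / 2) : ℝ) : ℂ)) k
      = (((N : ℝ) / 2 : ℝ) : ℂ) * (ZMod.stdAddChar k - ZMod.stdAddChar (-k))
          * ZMod.dft (fun j => ((φ j : ℝ) : ℂ)) k := by
  have hfun : (fun j => (((φ (j + 1) - φ (j - 1)) * ((N : ℝ) / 2) : ℝ) : ℂ))
      = (((N : ℝ) / 2 : ℝ) : ℂ) •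
          ((fun j : ZMod N => ((φ (j + 1) : ℝ) : ℂ))
            - fun j : ZMod N => ((φ (j + (-1)) : ℝ) : ℂ)) := by
    funext j
    simp only [Pi.smul_apply, Pi.sub_apply, smul_eq_mul]
    rw [show j + (-1 : ZMod N) = j - 1 by ring]
    push_cast
    ring
  rw [hfun, map_smul, map_sub]
  simp only [Pi.smul_apply, Pi.sub_apply, smul_eq_mul]
  rw [dft_shift (fun j => ((φ j : ℝ) : ℂ)) 1 k, dft_shift (fun j => ((φ j : ℝ) : ℂ)) (-1) k,
    one_mul, neg_one_mul]
  ring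

lemma sin_lb {a y : ℝ} (ha0 : 0 ≤ a) (ha : a ≤ π / 2) (h1 : a ≤ y) (h2 : y ≤ π - a) :
    Real.sin a ≤ Real.sin y := by
  rcases le_total y (π / 2) with h | h
  · exact Real.sin_le_sin_of_le_of_le_pi_div_two (by linarith) h h1
  · rw [← Real.sin_pi_sub y]
    exact Real.sin_le_sin_of_le_of_le_pi_div_two (by linarith) (by linarith) (by linarith)

lemma keyA {M m : ℕ} (hm1 : 1 ≤ m) (hm2 : 2 * m < M) :
    Real.sin (π / M) ≤ |Real.sin (2 * π * m / M)| := by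
  have hπ := Real.pi_pos
  have hN3 : 3 ≤ M := by omega
  have hN : (0:ℝ) < M := by positivity
  have hm1c : (1:ℝ) ≤ m := by exact_mod_cast hm1
  have hm2c : 2 * (m:ℝ) + 1 ≤ M := by exact_mod_cast hm2
  have h1 : π / M ≤ 2 * π * m / M := by gcongr; nlinarith
  have h2 : 2 * π * m / M ≤ π - π / M := by
    rw [div_le_iff₀ hN]
    have : (π - π / M) * M = π * M - π := by field_simp
    rw [this]; nlinarith
  have hy0 : 0 ≤ 2 * π * m / M := by positivity
  have hyπ : 2 * π * m / M ≤ π := by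
    have : 0 < π / M := by positivity
    linarith
  rw [_root_.abs_of_nonneg (Real.sin_nonneg_of_nonneg_of_le_pi hy0 hyπ)]
  exact sin_lb (by positivity) (by rw [div_le_div_iff₀ hN (by norm_num : (0:ℝ) < 2)]; nlinarith)
    h1 h2

lemma key {M m : ℕ} (hodd : Odd M) (hm1 : 1 ≤ m) (hm2 : m < M) :
    Real.sin (π / M) ≤ |Real.sin (2 * π * m / M)| := by
  rcases lt_trichotomy (2 * m) M with h | h | h
  · exact keyA hm1 h
  · exfalso; obtain ⟨t, ht⟩ := hodd; omega
  · have hm1' : 1 ≤ M - m := by omega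
    have hm2' : 2 * (M - m) < M := by omega
    have hN : (M:ℝ) ≠ 0 := Nat.cast_ne_zero.mpr (by omega)
    have hcast : 2 * π * m / M = 2 * π - 2 * π * ((M - m : ℕ) : ℝ) / M := by
      have hc : ((M - m : ℕ) : ℝ) = (M : ℝ) - m := by
        push_cast [Nat.cast_sub hm2.le]; ring
      rw [hc]; field_simp; ring
    rw [hcast]
    have hs : Real.sin (2 * π - 2 * π * ((M - m : ℕ) : ℝ) / M)
        = -Real.sin (2 * π * ((M - m : ℕ) : ℝ) / M) := by
      rw [Real.sin_sub]; simp
    rw [hs, abs_neg]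
    exact keyA hm1' hm2'

end DiscretePoincareAux

open DiscretePoincareAux in
/-- Discrete Poincaré inequality on the 1D torus, uniform mesh of size Δx = 1/N,
N odd: for zero-mean φ, Σ_i Δx φ_i² ≤ C_P² Σ_i Δx ((φ_{i+1}-φ_{i-1})/(2Δx))²
with C_P = 1/(N |sin(π/N)|). -/
theorem discrete_poincare_torus (N : ℕ) [NeZero N] (hodd : Odd N)
    (φ : ZMod N → ℝ)
    (hmean : ∑ i : ZMod N, (1 / (N : ℝ)) * φ i = 0) :
    ∑ i : ZMod N, (1 / (N : ℝ)) * (φ i) ^ 2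
      ≤ (1 / ((N : ℝ) * |Real.sin (Real.pi / N)|)) ^ 2 *
          ∑ i : ZMod N, (1 / (N : ℝ)) * ((φ (i + 1) - φ (i - 1)) / (2 * (1 / (N : ℝ)))) ^ 2 := by
  have hπ := Real.pi_pos
  have hNpos : (0:ℝ) < N := by
    have := Nat.pos_of_ne_zero (NeZero.ne N); exact_mod_cast this
  set C : ℝ := 1 / ((N : ℝ) * |Real.sin (π / N)|) with hC
  set Φ : ZMod N → ℂ := fun i => ((φ i : ℝ) : ℂ) with hΦdef
  set G : ZMod N → ℂ := fun j => (((φ (j + 1) - φ (j - 1)) * ((N : ℝ) / 2) : ℝ) : ℂ) with hGdef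
  have hsum0 : ∑ i : ZMod N, φ i = 0 := by
    have h1N : (1 / (N:ℝ)) ≠ 0 := by positivity
    have h := hmean
    rw [← Finset.mul_sum] at h
    exact (mul_eq_zero.mp h).resolve_left h1N
  have hΦ0 : ZMod.dft Φ 0 = 0 := by
    rw [ZMod.dft_apply_zero]
    simp only [hΦdef, ← Complex.ofReal_sum, hsum0, Complex.ofReal_zero]
  have hkey : ∀ k : ZMod N, Complex.normSq (ZMod.dft Φ k)
      ≤ C ^ 2 * Complex.normSq (ZMod.dft G k) := by
    intro k
    have hGk : Complex.normSq (ZMod.dft G k)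
        = (N:ℝ)^2 * Real.sin (2 * π * k.val / N) ^ 2 * Complex.normSq (ZMod.dft Φ k) := by
      rw [hGdef, hΦdef, dft_grad φ k, Complex.normSq_mul, Complex.normSq_mul,
        normSq_char_sub, Complex.normSq_ofReal]
      ring
    by_cases hk : k = 0
    · subst hk
      rw [hΦ0]
      simp only [map_zero]
      exact mul_nonneg (sq_nonneg _) (Complex.normSq_nonneg _)
    · have hval1 : 1 ≤ k.val := by
        rcases Nat.eq_zero_or_pos k.val with h | h
        · exact absurd ((ZMod.val_eq_zero k).mp h) hk
        · exact h
      have hval2 : k.val < N := ZMod.val_lt k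
      have hN2 : 2 ≤ N := by omega
      have hsin := key hodd hval1 hval2
      have hsinpos : 0 < Real.sin (π / N) := by
        apply Real.sin_pos_of_pos_of_lt_pi
        · positivity
        · rw [div_lt_iff₀ hNpos]
          have : (2:ℝ) ≤ N := by exact_mod_cast hN2
          nlinarith
      rw [hGk, hC, abs_of_pos hsinpos]
      set s := Real.sin (π / N) with hs
      set S := Real.sin (2 * π * k.val / N) with hS
      have hs2 : s^2 ≤ S^2 := by nlinarith [abs_nonneg S, _root_.sq_abs S]
      have hA : 0 ≤ Complex.normSq (ZMod.dft Φ k) := Complex.normSq_nonneg _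
      calc Complex.normSq (ZMod.dft Φ k)
          = (1 / ((N:ℝ) * s))^2 * (((N:ℝ) * s)^2 * Complex.normSq (ZMod.dft Φ k)) := by
            have hNs : ((N:ℝ) * s) ≠ 0 := by positivity
            field_simp
        _ ≤ (1 / ((N:ℝ) * s))^2 * ((N:ℝ)^2 * S^2 * Complex.normSq (ZMod.dft Φ k)) := by
            apply mul_le_mul_of_nonneg_left _ (by positivity)
            have hrw : ((N:ℝ) * s)^2 = (N:ℝ)^2 * s^2 := by ring
            rw [hrw]
            apply mul_le_mul_of_nonneg_right _ hA
            nlinarith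
  have hsumle : ∑ k : ZMod N, Complex.normSq (ZMod.dft Φ k)
      ≤ C^2 * ∑ k : ZMod N, Complex.normSq (ZMod.dft G k) := by
    rw [Finset.mul_sum]
    exact Finset.sum_le_sum fun k _ => hkey k
  rw [parseval, parseval] at hsumle
  have hsum2 : ∑ j : ZMod N, Complex.normSq (Φ j)
      ≤ C^2 * ∑ j : ZMod N, Complex.normSq (G j) := by
    have h' : (N:ℝ) * ∑ j : ZMod N, Complex.normSq (Φ j)
        ≤ (N:ℝ) * (C^2 * ∑ j : ZMod N, Complex.normSq (G j)) := by
      calc (N:ℝ) * ∑ j : ZMod N, Complex.normSq (Φ j)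
          ≤ C^2 * ((N:ℝ) * ∑ j : ZMod N, Complex.normSq (G j)) := hsumle
        _ = (N:ℝ) * (C^2 * ∑ j : ZMod N, Complex.normSq (G j)) := by ring
    exact le_of_mul_le_mul_left h' hNpos
  calc ∑ i : ZMod N, (1 / (N : ℝ)) * (φ i)^2
      = (1/(N:ℝ)) * ∑ j : ZMod N, Complex.normSq (Φ j) := by
        rw [← Finset.mul_sum]
        congr 1
        refine Finset.sum_congr rfl fun j _ => ?_
        rw [hΦdef, Complex.normSq_ofReal]
        ring
    _ ≤ (1/(N:ℝ)) * (C^2 * ∑ j : ZMod N, Complex.normSq (G j)) :=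
        mul_le_mul_of_nonneg_left hsum2 (by positivity)
    _ = C ^ 2 * ∑ i : ZMod N, (1 / (N : ℝ)) *
          ((φ (i + 1) - φ (i - 1)) / (2 * (1 / (N : ℝ)))) ^ 2 := by
        rw [Finset.mul_sum, Finset.mul_sum, Finset.mul_sum]
        refine Finset.sum_congr rfl fun i _ => ?_
        rw [hGdef, Complex.normSq_ofReal]
        have hN0 : (N:ℝ) ≠ 0 := ne_of_gt hNpos
        field_simp
end

section
/- Discrete entropy estimate for the BGK scheme: if (f^{n+1}_{ij}) solves ε Δx_i Δv_j (f^{n+1}_{ij} - f^n_{ij}) + Δt (F^{n+1}_{i+1/2,j} - F^{n+1}_{i-1/2,j}) = (Δt/ε) Δx_i Δv_j (ρ^{n+1}_i M_j - f^{n+1}_{ij}) with centered transport fluxes F_{i+1/2,j} = v_j (f_{i+1,j} + f_{ij}) Δv_j / 2, then (‖f^{n+1}‖²_{2,γ} - ‖f^n‖²_{2,γ})/(2Δt) + (1/ε²) ‖f^{n+1} - ρ^{n+1} M‖²_{2,γ} ≤ 0, where ρ^n_i = Σ_j Δv_j f^n_{ij}. -/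
/-- Discrete entropy estimate for the implicit BGK scheme with centered transport
fluxes: (‖f^{n+1}‖²_{2,γ} - ‖fⁿ‖²_{2,γ})/(2Δt) + (1/ε²)‖f^{n+1} - ρ^{n+1}M‖²_{2,γ} ≤ 0. -/
theorem discrete_entropy_estimate_BGK
    (N : ℕ) [NeZero N] {J : Type*} [Fintype J]
    (Δx : ZMod N → ℝ) (hΔx : ∀ i, 0 < Δx i)
    (Δv v Mw : J → ℝ) (hΔv : ∀ j, 0 < Δv j) (hM : ∀ j, 0 < Mw j)
    (hmass : ∑ j, Mw j * Δv j = 1)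
    (ε Δt : ℝ) (hε : 0 < ε) (hΔt : 0 < Δt)
    (f fnext : ZMod N → J → ℝ)
    (ρnext : ZMod N → ℝ) (hρ : ∀ i, ρnext i = ∑ j, Δv j * fnext i j)
    (hscheme : ∀ i j,
      ε * Δx i * Δv j * (fnext i j - f i j)
        + Δt * (v j * (fnext (i + 1) j + fnext i j) * Δv j / 2
              - v j * (fnext i j + fnext (i - 1) j) * Δv j / 2)
      = (Δt / ε) * Δx i * Δv j * (ρnext i * Mw j - fnext i j)) :
    ((∑ i, ∑ j, (fnext i j) ^ 2 * (Mw j)⁻¹ * Δx i * Δv j)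
        - (∑ i, ∑ j, (f i j) ^ 2 * (Mw j)⁻¹ * Δx i * Δv j)) / (2 * Δt)
      + (1 / ε ^ 2) *
          ∑ i, ∑ j, (fnext i j - ρnext i * Mw j) ^ 2 * (Mw j)⁻¹ * Δx i * Δv j ≤ 0 := by
  set A := ∑ i, ∑ j, (fnext i j) ^ 2 * (Mw j)⁻¹ * Δx i * Δv j with hA
  set B := ∑ i, ∑ j, (f i j) ^ 2 * (Mw j)⁻¹ * Δx i * Δv j with hB
  set D := ∑ i, ∑ j, (fnext i j - ρnext i * Mw j) ^ 2 * (Mw j)⁻¹ * Δx i * Δv j with hD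
  -- multiply the scheme by fnext * γ and sum
  have H : ∑ i, ∑ j, (ε * Δx i * Δv j * (fnext i j - f i j)
        + Δt * (v j * (fnext (i + 1) j + fnext i j) * Δv j / 2
              - v j * (fnext i j + fnext (i - 1) j) * Δv j / 2)) * (fnext i j * (Mw j)⁻¹)
      = ∑ i, ∑ j, ((Δt / ε) * Δx i * Δv j * (ρnext i * Mw j - fnext i j))
          * (fnext i j * (Mw j)⁻¹) :=
    Finset.sum_congr rfl fun i _ => Finset.sum_congr rfl fun j _ => by rw [hscheme]
  -- transport part vanishes by periodicity (telescoping)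
  have hT : ∑ i, ∑ j, (Δt * (v j * (fnext (i + 1) j + fnext i j) * Δv j / 2
              - v j * (fnext i j + fnext (i - 1) j) * Δv j / 2)) * (fnext i j * (Mw j)⁻¹)
      = 0 := by
    rw [Finset.sum_comm]
    apply Finset.sum_eq_zero
    intro j _
    have hshift : ∑ i : ZMod N, fnext (i + 1) j * fnext i j
        = ∑ i : ZMod N, fnext i j * fnext (i - 1) j :=
      Fintype.sum_equiv (Equiv.addRight (1 : ZMod N)) _ _ (fun i => by
        simp [add_sub_cancel_right])
    calc ∑ i : ZMod N, (Δt * (v j * (fnext (i + 1) j + fnext i j) * Δv j / 2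
              - v j * (fnext i j + fnext (i - 1) j) * Δv j / 2)) * (fnext i j * (Mw j)⁻¹)
        = ∑ i : ZMod N, ((Δt * v j * Δv j * (Mw j)⁻¹ / 2) * (fnext (i + 1) j * fnext i j)
            - (Δt * v j * Δv j * (Mw j)⁻¹ / 2) * (fnext i j * fnext (i - 1) j)) :=
          Finset.sum_congr rfl fun i _ => by ring
      _ = 0 := by
          rw [Finset.sum_sub_distrib, ← Finset.mul_sum, ← Finset.mul_sum, hshift, sub_self]
  -- collision part
  have hzero : ∀ i, ∑ j, (fnext i j - ρnext i * Mw j) * Δv j = 0 := by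
    intro i
    have : ∑ j, (fnext i j - ρnext i * Mw j) * Δv j
        = (∑ j, Δv j * fnext i j) - ρnext i * ∑ j, Mw j * Δv j := by
      rw [Finset.mul_sum, ← Finset.sum_sub_distrib]
      exact Finset.sum_congr rfl fun j _ => by ring
    rw [this, hmass, ← hρ]; ring
  have hColl : ∑ i, ∑ j, ((Δt / ε) * Δx i * Δv j * (ρnext i * Mw j - fnext i j))
          * (fnext i j * (Mw j)⁻¹)
      = -((Δt / ε) * D) := by
    rw [hD, Finset.mul_sum, ← Finset.sum_neg_distrib]
    apply Finset.sum_congr rfl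
    intro i _
    have key : ∑ j, (((Δt / ε) * Δx i * Δv j * (ρnext i * Mw j - fnext i j))
            * (fnext i j * (Mw j)⁻¹)
          + (Δt / ε) * ((fnext i j - ρnext i * Mw j) ^ 2 * (Mw j)⁻¹ * Δx i * Δv j))
        = (-((Δt / ε) * Δx i * ρnext i)) * ∑ j, (fnext i j - ρnext i * Mw j) * Δv j := by
      rw [Finset.mul_sum]
      refine Finset.sum_congr rfl fun j _ => ?_
      have hMj : Mw j ≠ 0 := (hM j).ne'
      field_simp
      ring
    rw [hzero i, mul_zero, Finset.sum_add_distrib, ← Finset.mul_sum] at key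
    linarith
  -- relaxation part bounds the entropy difference
  have hrelax : (ε / 2) * (A - B)
      ≤ ∑ i, ∑ j, (ε * Δx i * Δv j * (fnext i j - f i j)) * (fnext i j * (Mw j)⁻¹) := by
    have hAB : (ε / 2) * (A - B)
        = ∑ i, ∑ j, (ε / 2) * (((fnext i j) ^ 2 - (f i j) ^ 2) * (Mw j)⁻¹ * Δx i * Δv j) := by
      rw [hA, hB, ← Finset.sum_sub_distrib, Finset.mul_sum]
      refine Finset.sum_congr rfl fun i _ => ?_
      rw [← Finset.sum_sub_distrib, Finset.mul_sum]
      exact Finset.sum_congr rfl fun j _ => by ring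
    rw [hAB]
    refine Finset.sum_le_sum fun i _ => Finset.sum_le_sum fun j _ => ?_
    have hpos : 0 < ε * Δx i * Δv j * (Mw j)⁻¹ / 2 :=
      div_pos (mul_pos (mul_pos (mul_pos hε (hΔx i)) (hΔv j)) (inv_pos.mpr (hM j))) two_pos
    nlinarith [mul_nonneg hpos.le (sq_nonneg (fnext i j - f i j))]
  -- combine
  have hdistr : ∑ i, ∑ j, (ε * Δx i * Δv j * (fnext i j - f i j)
        + Δt * (v j * (fnext (i + 1) j + fnext i j) * Δv j / 2
              - v j * (fnext i j + fnext (i - 1) j) * Δv j / 2)) * (fnext i j * (Mw j)⁻¹)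
      = (∑ i, ∑ j, (ε * Δx i * Δv j * (fnext i j - f i j)) * (fnext i j * (Mw j)⁻¹))
        + ∑ i, ∑ j, (Δt * (v j * (fnext (i + 1) j + fnext i j) * Δv j / 2
              - v j * (fnext i j + fnext (i - 1) j) * Δv j / 2)) * (fnext i j * (Mw j)⁻¹) := by
    rw [← Finset.sum_add_distrib]
    refine Finset.sum_congr rfl fun i _ => ?_
    rw [← Finset.sum_add_distrib]
    exact Finset.sum_congr rfl fun j _ => by ring
  have hsplit : ∑ i, ∑ j, (ε * Δx i * Δv j * (fnext i j - f i j)) * (fnext i j * (Mw j)⁻¹)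
      = -((Δt / ε) * D) := by linarith [H, hT, hColl, hdistr]
  have hDnn : 0 ≤ D :=
    Finset.sum_nonneg fun i _ => Finset.sum_nonneg fun j _ =>
      mul_nonneg (mul_nonneg (mul_nonneg (sq_nonneg _) (inv_pos.mpr (hM j)).le)
        (hΔx i).le) (hΔv j).le
  have heq : (A - B) / (2 * Δt) + (1 / ε ^ 2) * D
      = ((ε / 2) * (A - B) + (Δt / ε) * D) / (ε * Δt) := by
    field_simp
  rw [heq]
  apply div_nonpos_of_nonpos_of_nonneg
  · linarith
  · exact (mul_pos hε hΔt).le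
end

section
/- Discrete moment estimates: for f = (f_{ij}) with moments ρ_i = Σ_j Δv_j f_{ij}, ε J_i = Σ_j Δv_j v_j f_{ij}, S_i = Σ_j Δv_j (v_j² - m₂^{Δv}) f_{ij}, one has ‖ρ‖₂ ≤ ‖f‖_{2,γ}, ε‖J‖₂ ≤ (m₂^{Δv})^{1/2} ‖f - ρM‖_{2,γ}, and ‖S‖₂ ≤ (m₄^{Δv} - (m₂^{Δv})²)^{1/2} ‖f - ρM‖_{2,γ}. -/
private lemma cs_aux (s : Finset ℤ) (w M Δv g : ℤ → ℝ)
    (hM : ∀ j ∈ s, 0 < M j) (hΔv : ∀ j ∈ s, 0 < Δv j) :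
    (∑ j ∈ s, Δv j * w j * g j) ^ 2
      ≤ (∑ j ∈ s, Δv j * w j ^ 2 * M j) * (∑ j ∈ s, g j ^ 2 * (M j)⁻¹ * Δv j) := by
  have key := Finset.sum_mul_sq_le_sq_mul_sq s
    (fun j => w j * Real.sqrt (M j * Δv j)) (fun j => g j * Real.sqrt (Δv j / M j))
  have h1 : ∀ j ∈ s, (w j * Real.sqrt (M j * Δv j)) * (g j * Real.sqrt (Δv j / M j))
      = Δv j * w j * g j := by
    intro j hj
    have hM' := hM j hj; have hΔ := hΔv j hj
    have : Real.sqrt (M j * Δv j) * Real.sqrt (Δv j / M j) = Δv j := by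
      rw [← Real.sqrt_mul (by positivity)]
      have : M j * Δv j * (Δv j / M j) = Δv j ^ 2 := by
        field_simp
      rw [this, Real.sqrt_sq hΔ.le]
    calc (w j * Real.sqrt (M j * Δv j)) * (g j * Real.sqrt (Δv j / M j))
        = (Real.sqrt (M j * Δv j) * Real.sqrt (Δv j / M j)) * (w j * g j) := by ring
      _ = Δv j * w j * g j := by rw [this]; ring
  have h2 : ∀ j ∈ s, (w j * Real.sqrt (M j * Δv j)) ^ 2 = Δv j * w j ^ 2 * M j := by
    intro j hj
    have hM' := hM j hj; have hΔ := hΔv j hj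
    rw [mul_pow, Real.sq_sqrt (by positivity)]; ring
  have h3 : ∀ j ∈ s, (g j * Real.sqrt (Δv j / M j)) ^ 2 = g j ^ 2 * (M j)⁻¹ * Δv j := by
    intro j hj
    have hM' := hM j hj; have hΔ := hΔv j hj
    rw [mul_pow, Real.sq_sqrt (by positivity), div_eq_mul_inv]
    ring
  rw [Finset.sum_congr rfl h1, Finset.sum_congr rfl h2, Finset.sum_congr rfl h3] at key
  exact key

private lemma sqrt_step {I : Type*} [Fintype I] (Δx : I → ℝ) (hΔx : ∀ i, 0 ≤ Δx i)
    (T A : I → ℝ) (C : ℝ) (hC : 0 ≤ C) (h : ∀ i, T i ^ 2 ≤ C * A i) :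
    Real.sqrt (∑ i, T i ^ 2 * Δx i) ≤ Real.sqrt C * Real.sqrt (∑ i, A i * Δx i) := by
  rw [← Real.sqrt_mul hC]
  apply Real.sqrt_le_sqrt
  rw [Finset.mul_sum]
  apply Finset.sum_le_sum
  intro i _
  calc T i ^ 2 * Δx i ≤ (C * A i) * Δx i :=
        mul_le_mul_of_nonneg_right (h i) (hΔx i)
    _ = C * (A i * Δx i) := by ring

/-- Discrete moment estimates: with ρ_i = Σ_j Δv_j f_{ij},
ε J_i = Σ_j Δv_j v_j f_{ij}, S_i = Σ_j Δv_j (v_j² - m₂) f_{ij}, one has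
‖ρ‖₂ ≤ ‖f‖_{2,γ}, ε‖J‖₂ ≤ √m₂ ‖f - ρM‖_{2,γ},
‖S‖₂ ≤ √(m₄ - m₂²) ‖f - ρM‖_{2,γ}. -/
theorem discrete_moment_estimates {I : Type*} [Fintype I] (L : ℕ)
    (Δx : I → ℝ) (hΔx : ∀ i, 0 < Δx i)
    (v Δv Mw : ℤ → ℝ)
    (hvsym : ∀ j, v j = - v (1 - j))
    (hΔvsym : ∀ j, Δv j = Δv (1 - j))
    (hΔv : ∀ j ∈ Finset.Icc (-(L : ℤ) + 1) (L : ℤ), 0 < Δv j)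
    (hM : ∀ j ∈ Finset.Icc (-(L : ℤ) + 1) (L : ℤ), 0 < Mw j)
    (hMsym : ∀ j, Mw j = Mw (1 - j))
    (hmass : ∑ j ∈ Finset.Icc (-(L : ℤ) + 1) (L : ℤ), Mw j * Δv j = 1)
    (m₂ m₄ : ℝ)
    (hm₂ : m₂ = ∑ j ∈ Finset.Icc (-(L : ℤ) + 1) (L : ℤ), |v j| ^ 2 * Mw j * Δv j)
    (hm₄ : m₄ = ∑ j ∈ Finset.Icc (-(L : ℤ) + 1) (L : ℤ), |v j| ^ 4 * Mw j * Δv j)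
    (ε : ℝ) (hε : 0 < ε)
    (f : I → ℤ → ℝ) (ρ Jm S : I → ℝ)
    (hρ : ∀ i, ρ i = ∑ j ∈ Finset.Icc (-(L : ℤ) + 1) (L : ℤ), Δv j * f i j)
    (hJ : ∀ i, ε * Jm i = ∑ j ∈ Finset.Icc (-(L : ℤ) + 1) (L : ℤ), Δv j * v j * f i j)
    (hS : ∀ i, S i = ∑ j ∈ Finset.Icc (-(L : ℤ) + 1) (L : ℤ), Δv j * (v j ^ 2 - m₂) * f i j) :
    Real.sqrt (∑ i, (ρ i) ^ 2 * Δx i)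
        ≤ Real.sqrt (∑ i, ∑ j ∈ Finset.Icc (-(L : ℤ) + 1) (L : ℤ),
            (f i j) ^ 2 * (Mw j)⁻¹ * Δx i * Δv j) ∧
    ε * Real.sqrt (∑ i, (Jm i) ^ 2 * Δx i)
        ≤ Real.sqrt m₂ * Real.sqrt (∑ i, ∑ j ∈ Finset.Icc (-(L : ℤ) + 1) (L : ℤ),
            (f i j - ρ i * Mw j) ^ 2 * (Mw j)⁻¹ * Δx i * Δv j) ∧
    Real.sqrt (∑ i, (S i) ^ 2 * Δx i)
        ≤ Real.sqrt (m₄ - m₂ ^ 2) * Real.sqrt (∑ i, ∑ j ∈ Finset.Icc (-(L : ℤ) + 1) (L : ℤ),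
            (f i j - ρ i * Mw j) ^ 2 * (Mw j)⁻¹ * Δx i * Δv j) := by
  set s : Finset ℤ := Finset.Icc (-(L : ℤ) + 1) (L : ℤ) with hs
  -- basic moment identities
  have h2 : ∑ j ∈ s, Δv j * v j ^ 2 * Mw j = m₂ := by
    rw [hm₂]
    exact Finset.sum_congr rfl fun j _ => by rw [sq_abs]; ring
  have h4 : ∑ j ∈ s, Δv j * (v j ^ 2) ^ 2 * Mw j = m₄ := by
    rw [hm₄]
    refine Finset.sum_congr rfl fun j _ => ?_
    have h : |v j| ^ 4 = (v j ^ 2) ^ 2 := by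
      rw [← sq_abs (v j)]; ring
    rw [h]; ring
  -- odd moment vanishes by symmetry
  have hz1 : ∑ j ∈ s, Δv j * v j * Mw j = 0 := by
    have hmem : ∀ j : ℤ, j ∈ s ↔ 1 - j ∈ s := by
      intro j; simp only [hs, Finset.mem_Icc]; omega
    have hrefl : ∑ j ∈ s, Δv (1 - j) * v (1 - j) * Mw (1 - j)
        = ∑ j ∈ s, Δv j * v j * Mw j := by
      refine Finset.sum_equiv (Equiv.subLeft (1 : ℤ)) (fun j => ?_) (fun j _ => ?_)
      · simpa using hmem j
      · simp [Equiv.subLeft]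
    have hneg : ∀ j ∈ s, Δv (1 - j) * v (1 - j) * Mw (1 - j)
        = -(Δv j * v j * Mw j) := by
      intro j _
      rw [← hΔvsym j, ← hMsym j]
      have : v (1 - j) = - v j := by rw [hvsym j]; ring
      rw [this]; ring
    rw [Finset.sum_congr rfl hneg, Finset.sum_neg_distrib] at hrefl
    linarith
  -- second centered moment vanishes
  have hz2 : ∑ j ∈ s, Δv j * (v j ^ 2 - m₂) * Mw j = 0 := by
    have : ∀ j ∈ s, Δv j * (v j ^ 2 - m₂) * Mw j
        = Δv j * v j ^ 2 * Mw j - m₂ * (Mw j * Δv j) := fun j _ => by ring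
    rw [Finset.sum_congr rfl this, Finset.sum_sub_distrib, ← Finset.mul_sum, hmass, h2]
    ring
  -- fourth centered moment
  have hz3 : ∑ j ∈ s, Δv j * (v j ^ 2 - m₂) ^ 2 * Mw j = m₄ - m₂ ^ 2 := by
    have : ∀ j ∈ s, Δv j * (v j ^ 2 - m₂) ^ 2 * Mw j
        = Δv j * (v j ^ 2) ^ 2 * Mw j - 2 * m₂ * (Δv j * v j ^ 2 * Mw j)
          + m₂ ^ 2 * (Mw j * Δv j) := fun j _ => by ring
    rw [Finset.sum_congr rfl this, Finset.sum_add_distrib, Finset.sum_sub_distrib,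
      ← Finset.mul_sum, ← Finset.mul_sum, hmass, h2, h4]
    ring
  have hm₂0 : 0 ≤ m₂ := by
    rw [← h2]
    refine Finset.sum_nonneg fun j hj => ?_
    have := hΔv j hj; have := hM j hj; positivity
  have hm₄0 : 0 ≤ m₄ - m₂ ^ 2 := by
    rw [← hz3]
    refine Finset.sum_nonneg fun j hj => ?_
    have := hΔv j hj; have := hM j hj; positivity
  set A0 : I → ℝ := fun i => ∑ j ∈ s, f i j ^ 2 * (Mw j)⁻¹ * Δv j with hA0
  set A : I → ℝ := fun i => ∑ j ∈ s, (f i j - ρ i * Mw j) ^ 2 * (Mw j)⁻¹ * Δv j with hA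
  have hRHS0 : ∑ i, ∑ j ∈ s, f i j ^ 2 * (Mw j)⁻¹ * Δx i * Δv j
      = ∑ i, A0 i * Δx i := by
    refine Finset.sum_congr rfl fun i _ => ?_
    rw [hA0, Finset.sum_mul]
    exact Finset.sum_congr rfl fun j _ => by ring
  have hRHS : ∑ i, ∑ j ∈ s, (f i j - ρ i * Mw j) ^ 2 * (Mw j)⁻¹ * Δx i * Δv j
      = ∑ i, A i * Δx i := by
    refine Finset.sum_congr rfl fun i _ => ?_
    rw [hA, Finset.sum_mul]
    exact Finset.sum_congr rfl fun j _ => by ring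
  refine ⟨?_, ?_, ?_⟩
  · -- first estimate
    rw [hRHS0]
    have h := sqrt_step Δx (fun i => (hΔx i).le) ρ A0 1 zero_le_one (fun i => ?_)
    · simpa using h
    · have key := cs_aux s (fun _ => 1) Mw Δv (f i) hM hΔv
      have e1 : ∑ j ∈ s, Δv j * (1 : ℝ) * f i j = ρ i := by
        rw [hρ i]; exact Finset.sum_congr rfl fun j _ => by ring
      have e2 : ∑ j ∈ s, Δv j * (1 : ℝ) ^ 2 * Mw j = 1 :=
        (Finset.sum_congr rfl fun j _ => by ring).trans hmass
      rw [e1, e2] at key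
      simpa [hA0] using key
  · -- second estimate
    rw [hRHS]
    have hsq : ∑ i, (ε * Jm i) ^ 2 * Δx i = ε ^ 2 * ∑ i, Jm i ^ 2 * Δx i := by
      rw [Finset.mul_sum]; exact Finset.sum_congr rfl fun i _ => by ring
    have hε2 : ε * Real.sqrt (∑ i, Jm i ^ 2 * Δx i)
        = Real.sqrt (∑ i, (ε * Jm i) ^ 2 * Δx i) := by
      rw [hsq, Real.sqrt_mul (sq_nonneg ε), Real.sqrt_sq hε.le]
    rw [hε2]
    refine sqrt_step Δx (fun i => (hΔx i).le) (fun i => ε * Jm i) A m₂ hm₂0 fun i => ?_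
    have key := cs_aux s v Mw Δv (fun j => f i j - ρ i * Mw j) hM hΔv
    have e1 : ∑ j ∈ s, Δv j * v j * (f i j - ρ i * Mw j) = ε * Jm i := by
      have : ∀ j ∈ s, Δv j * v j * (f i j - ρ i * Mw j)
          = Δv j * v j * f i j - ρ i * (Δv j * v j * Mw j) := fun j _ => by ring
      rw [Finset.sum_congr rfl this, Finset.sum_sub_distrib, ← Finset.mul_sum, hz1, hJ i]
      ring
    rw [e1, h2] at key
    simpa [hA] using key
  · -- third estimate
    rw [hRHS]
    refine sqrt_step Δx (fun i => (hΔx i).le) S A (m₄ - m₂ ^ 2) hm₄0 fun i => ?_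
    have key := cs_aux s (fun j => v j ^ 2 - m₂) Mw Δv (fun j => f i j - ρ i * Mw j) hM hΔv
    have e1 : ∑ j ∈ s, Δv j * (v j ^ 2 - m₂) * (f i j - ρ i * Mw j) = S i := by
      have : ∀ j ∈ s, Δv j * (v j ^ 2 - m₂) * (f i j - ρ i * Mw j)
          = Δv j * (v j ^ 2 - m₂) * f i j - ρ i * (Δv j * (v j ^ 2 - m₂) * Mw j) :=
        fun j _ => by ring
      rw [Finset.sum_congr rfl this, Finset.sum_sub_distrib, ← Finset.mul_sum, hz2, hS i]
      ring
    rw [e1, hz3] at key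
    simpa [hA] using key
end

section
/- Estimate of the discrete Poisson solution: if (φ_i)_{i∈ℤ/Nℤ} with N odd satisfies −((D_xφ)_{i+1} − (D_xφ)_{i-1})/2 = Δx_i ρ_i for all i and Σ_i Δx_i φ_i = 0, then ‖D_xφ‖₂ ≤ C_P ‖ρ‖₂, where C_P is the discrete Poincaré constant. -/
/-- Estimate of the discrete Poisson solution on the torus (N odd):
if −((D_xφ)_{i+1} − (D_xφ)_{i-1})/2 = Δx_i ρ_i and φ has zero mean,
then ‖D_xφ‖₂ ≤ C_P ‖ρ‖₂ where C_P is the discrete Poincaré constant. -/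
theorem discrete_poisson_estimate (N : ℕ) [NeZero N] (hodd : Odd N)
    (Δx : ZMod N → ℝ) (hΔx : ∀ i, 0 < Δx i)
    (CP : ℝ)
    (hPoincare : ∀ ψ : ZMod N → ℝ, (∑ i, Δx i * ψ i = 0) →
        Real.sqrt (∑ i, Δx i * (ψ i) ^ 2)
          ≤ CP * Real.sqrt (∑ i, Δx i * ((ψ (i + 1) - ψ (i - 1)) / (2 * Δx i)) ^ 2))
    (φ ρ : ZMod N → ℝ)
    (Dφ : ZMod N → ℝ) (hDφ : ∀ i, Dφ i = (φ (i + 1) - φ (i - 1)) / (2 * Δx i))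
    (hpoisson : ∀ i, -((Dφ (i + 1) - Dφ (i - 1)) / 2) = Δx i * ρ i)
    (hmean : ∑ i, Δx i * φ i = 0) :
    Real.sqrt (∑ i, Δx i * (Dφ i) ^ 2) ≤ CP * Real.sqrt (∑ i, Δx i * (ρ i) ^ 2) := by
  set S := ∑ i, Δx i * (Dφ i) ^ 2 with hSdef
  have hSnn : 0 ≤ S := Finset.sum_nonneg fun i _ => mul_nonneg (hΔx i).le (sq_nonneg _)
  -- testing the equation against φ
  have key : ∑ i, Δx i * ρ i * φ i = S := by
    have h1 : ∑ i, Δx i * ρ i * φ i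
        = ∑ i, (Dφ (i - 1) * φ i / 2 - Dφ (i + 1) * φ i / 2) := by
      apply Finset.sum_congr rfl
      intro i _
      linear_combination (-(φ i)) * hpoisson i
    have h2 : ∑ i, Dφ (i - 1) * φ i / 2 = ∑ j, Dφ j * φ (j + 1) / 2 := by
      have := Equiv.sum_comp (Equiv.subRight (1 : ZMod N))
        (fun j => Dφ j * φ (j + 1) / 2)
      simpa using this
    have h3 : ∑ i, Dφ (i + 1) * φ i / 2 = ∑ j, Dφ j * φ (j - 1) / 2 := by
      have := Equiv.sum_comp (Equiv.addRight (1 : ZMod N))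
        (fun j => Dφ j * φ (j - 1) / 2)
      simpa using this
    rw [h1, Finset.sum_sub_distrib, h2, h3, ← Finset.sum_sub_distrib]
    apply Finset.sum_congr rfl
    intro j _
    have hne : (2 : ℝ) * Δx j ≠ 0 := by nlinarith [hΔx j]
    have hd : φ (j + 1) - φ (j - 1) = Dφ j * (2 * Δx j) := by
      rw [hDφ j, div_mul_cancel₀ _ hne]
    linear_combination (Dφ j / 2) * hd
  -- Cauchy–Schwarz
  set R := Real.sqrt (∑ i, Δx i * (ρ i) ^ 2) with hRdef
  set Φ := Real.sqrt (∑ i, Δx i * (φ i) ^ 2) with hΦdef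
  have hRnn : 0 ≤ R := Real.sqrt_nonneg _
  have hcs : S ≤ R * Φ := by
    have cs := Finset.sum_mul_sq_le_sq_mul_sq (Finset.univ : Finset (ZMod N))
      (fun i => Real.sqrt (Δx i) * ρ i) (fun i => Real.sqrt (Δx i) * φ i)
    have e1 : ∀ i : ZMod N,
        (Real.sqrt (Δx i) * ρ i) * (Real.sqrt (Δx i) * φ i) = Δx i * ρ i * φ i := by
      intro i
      rw [show (Real.sqrt (Δx i) * ρ i) * (Real.sqrt (Δx i) * φ i)
          = (Real.sqrt (Δx i) * Real.sqrt (Δx i)) * (ρ i * φ i) by ring,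
        Real.mul_self_sqrt (hΔx i).le]
      ring
    have e2 : ∀ i : ZMod N, (Real.sqrt (Δx i) * ρ i) ^ 2 = Δx i * (ρ i) ^ 2 := by
      intro i; rw [mul_pow, Real.sq_sqrt (hΔx i).le]
    have e3 : ∀ i : ZMod N, (Real.sqrt (Δx i) * φ i) ^ 2 = Δx i * (φ i) ^ 2 := by
      intro i; rw [mul_pow, Real.sq_sqrt (hΔx i).le]
    simp only [e1, e2, e3, key] at cs
    have hρnn : 0 ≤ ∑ i, Δx i * (ρ i) ^ 2 :=
      Finset.sum_nonneg fun i _ => mul_nonneg (hΔx i).le (sq_nonneg _)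
    calc S = Real.sqrt (S ^ 2) := (Real.sqrt_sq hSnn).symm
      _ ≤ Real.sqrt ((∑ i, Δx i * (ρ i) ^ 2) * ∑ i, Δx i * (φ i) ^ 2) :=
          Real.sqrt_le_sqrt cs
      _ = R * Φ := Real.sqrt_mul hρnn _
  -- Poincaré applied to φ
  have hP : Φ ≤ CP * Real.sqrt S := by
    have := hPoincare φ hmean
    simp only [← hDφ] at this
    exact this
  rcases eq_or_lt_of_le hSnn with h0 | hpos
  · -- S = 0 : Dφ ≡ 0 hence ρ ≡ 0
    have hD0 : ∀ i, Dφ i = 0 := by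
      intro i
      have := (Finset.sum_eq_zero_iff_of_nonneg
        (fun i _ => mul_nonneg (hΔx i).le (sq_nonneg (Dφ i)))).mp h0.symm i (Finset.mem_univ i)
      have h' : (Dφ i) ^ 2 = 0 :=
        (mul_eq_zero.mp this).resolve_left (hΔx i).ne'
      exact pow_eq_zero_iff (two_ne_zero) |>.mp h'
    have hρ0 : ∀ i, ρ i = 0 := by
      intro i
      have := hpoisson i
      rw [hD0 (i + 1), hD0 (i - 1)] at this
      have h' : Δx i * ρ i = 0 := by linarith
      exact (mul_eq_zero.mp h').resolve_left (hΔx i).ne'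
    have : R = 0 := by
      rw [hRdef]
      have : (∑ i, Δx i * (ρ i) ^ 2) = 0 :=
        Finset.sum_eq_zero fun i _ => by rw [hρ0 i]; ring
      rw [this, Real.sqrt_zero]
    rw [← h0, this, Real.sqrt_zero, mul_zero]
  · have hA : 0 < Real.sqrt S := Real.sqrt_pos.mpr hpos
    have hA2 : Real.sqrt S * Real.sqrt S = S := Real.mul_self_sqrt hSnn
    nlinarith [mul_le_mul_of_nonneg_left hP hRnn]
end

section
/- Every nonzero eigenvalue λ of the Fourier-mode BGK operator g ↦ (∫_ℝ g dv) M − (1 + ikv) g on L²(dγ) satisfies Re(λ) = −1 + (∫ g_λ dv)² / ‖g_λ‖²_{L²(dγ)} ∈ [−1, 0) for the (normalized real-mass) eigenfunction g_λ; in particular for k = 0 the only nonzero eigenvalue is λ = −1. -/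
open MeasureTheory

/-- Every nonzero eigenvalue lam of the Fourier-mode BGK operator
g ↦ (∫ g dv) M − (1 + ikv) g on L²(dγ) satisfies
Re(lam) = −1 + (∫ g dv)²/‖g‖²_{L²(dγ)} ∈ [−1, 0) for the (real-mass)
eigenfunction g; in particular for k = 0 the only nonzero eigenvalue is −1. -/
theorem bgk_fourier_eigenvalue
    (M : ℝ → ℝ) (hM : ∀ v, M v = (Real.sqrt (2 * Real.pi))⁻¹ * Real.exp (-(v ^ 2) / 2))
    (k : ℝ) (lam : ℂ) (hlam : lam ≠ 0)
    (g : ℝ → ℂ)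
    (hgInt : Integrable g)
    (hgL2 : Integrable (fun v => ‖g v‖ ^ 2 / M v))
    (hg_ne : 0 < ∫ v, ‖g v‖ ^ 2 / M v)
    (hvg : Integrable (fun v => v * ‖g v‖ ^ 2 / M v))
    (hmass_real : (∫ v, g v).im = 0)
    (heig : ∀ v, (∫ w, g w) * (M v : ℂ) - (1 + Complex.I * k * v) * g v = lam * g v) :
    lam.re = -1 + ((∫ v, g v).re) ^ 2 / (∫ v, ‖g v‖ ^ 2 / M v) ∧
    lam.re ∈ Set.Ico (-1 : ℝ) 0 ∧
    (k = 0 → lam = -1) := by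
  set m := ∫ v, g v with hm
  set N := ∫ v, ‖g v‖ ^ 2 / M v with hNdef
  set V := ∫ v, v * ‖g v‖ ^ 2 / M v with hVdef
  clear_value m N V
  have hMpos : ∀ v, 0 < M v := by
    intro v; rw [hM]; positivity
  have hMdef : M = fun v => (Real.sqrt (2 * Real.pi))⁻¹ * Real.exp (-(v ^ 2) / 2) :=
    funext hM
  have hexp : ∀ v : ℝ, Real.exp (-(1/2) * v ^ 2) = Real.exp (-(v ^ 2) / 2) := by
    intro v; ring_nf
  have hMint : Integrable M := by
    rw [hMdef]
    simp_rw [← hexp]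
    exact (integrable_exp_neg_mul_sq (by norm_num)).const_mul _
  have hMone : ∫ v, M v = 1 := by
    rw [hMdef]
    simp_rw [← hexp]
    rw [integral_const_mul, integral_gaussian,
      show Real.pi / (1/2) = 2 * Real.pi by ring]
    exact inv_mul_cancel₀ (Real.sqrt_ne_zero'.mpr (by positivity))
  have hpt : ∀ v : ℝ, (lam + 1 + Complex.I * k * v) * g v = m * M v := by
    intro v; linear_combination - heig v
  have habs : ∀ v : ℝ, ((‖g v‖ ^ 2 : ℝ) : ℂ) = g v * (starRingEnd ℂ) (g v) := by
    intro v
    rw [Complex.mul_conj]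
    norm_cast
    rw [Complex.sq_norm]
  have h1 : ∀ v : ℝ, (lam + 1) * ((‖g v‖ ^ 2 / M v : ℝ) : ℂ)
      + Complex.I * k * ((v * ‖g v‖ ^ 2 / M v : ℝ) : ℂ)
      = m * (starRingEnd ℂ) (g v) := by
    intro v
    have hv := hpt v
    have hMne : ((M v : ℝ) : ℂ) ≠ 0 := by exact_mod_cast (hMpos v).ne'
    have e1 : ((‖g v‖ ^ 2 / M v : ℝ) : ℂ)
        = g v * (starRingEnd ℂ) (g v) / (M v : ℂ) := by
      push_cast
      rw [← habs v]
      push_cast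
      ring
    have e2 : ((v * ‖g v‖ ^ 2 / M v : ℝ) : ℂ)
        = (v : ℂ) * (g v * (starRingEnd ℂ) (g v)) / (M v : ℂ) := by
      push_cast
      rw [← habs v]
      push_cast
      ring
    rw [e1, e2]
    field_simp
    linear_combination (starRingEnd ℂ) (g v) * hv
  have I1 : Integrable (fun v : ℝ => ((‖g v‖ ^ 2 / M v : ℝ) : ℂ)) := hgL2.ofReal
  have I2 : Integrable (fun v : ℝ => ((v * ‖g v‖ ^ 2 / M v : ℝ) : ℂ)) := hvg.ofReal
  have key : m * (starRingEnd ℂ) m = (lam + 1) * (N : ℂ) + Complex.I * k * (V : ℂ) := by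
    calc m * (starRingEnd ℂ) m = ∫ v, m * (starRingEnd ℂ) (g v) := by
          rw [integral_const_mul, integral_conj, ← hm]
      _ = ∫ v, ((lam + 1) * ((‖g v‖ ^ 2 / M v : ℝ) : ℂ)
            + Complex.I * k * ((v * ‖g v‖ ^ 2 / M v : ℝ) : ℂ)) :=
          integral_congr_ae (Filter.Eventually.of_forall fun v => (h1 v).symm)
      _ = (lam + 1) * (N : ℂ) + Complex.I * k * (V : ℂ) := by
          have hofR1 : (∫ a : ℝ, ((‖g a‖ ^ 2 / M a : ℝ) : ℂ)) = (N : ℂ) := by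
            rw [hNdef]; exact integral_ofReal
          have hofR2 : (∫ a : ℝ, ((a * ‖g a‖ ^ 2 / M a : ℝ) : ℂ)) = (V : ℂ) := by
            rw [hVdef]; exact integral_ofReal
          rw [integral_add (I1.const_mul _) (I2.const_mul _), integral_const_mul,
            integral_const_mul, hofR1, hofR2]
  have hre : m.re ^ 2 = (lam.re + 1) * N := by
    have h := congrArg Complex.re key
    simp [Complex.mul_re, Complex.add_re, Complex.mul_im, Complex.add_im, hmass_real] at h
    nlinarith [h]
  have hNne : N ≠ 0 := hg_ne.ne'
  have hpart1 : lam.re = -1 + m.re ^ 2 / N := by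
    rw [hre]
    field_simp
    ring
  have hge : -1 ≤ lam.re := by
    rw [hpart1]
    have : 0 ≤ m.re ^ 2 / N := div_nonneg (sq_nonneg _) hg_ne.le
    linarith
  have hlt : lam.re < 0 := by
    rcases eq_or_ne m.re 0 with h0 | h0
    · have h2 : (lam.re + 1) * N = 0 := by rw [← hre, h0]; ring
      have : lam.re + 1 = 0 := by
        rcases mul_eq_zero.mp h2 with h | h
        · exact h
        · exact absurd h hNne
      linarith
    · by_contra hge0
      push_neg at hge0
      set a := lam.re + 1 with ha
      clear_value a
      have ha1 : 1 ≤ a := by simp only [ha]; linarith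
      have ha0 : 0 < a := by linarith
      have hden : ∀ v : ℝ, 0 < a ^ 2 + (lam.im + k * v) ^ 2 := by
        intro v; nlinarith [sq_nonneg (lam.im + k * v)]
      have hsq : ∀ v : ℝ, (a ^ 2 + (lam.im + k * v) ^ 2) * ‖g v‖ ^ 2
          = m.re ^ 2 * M v ^ 2 := by
        intro v
        have hns := congrArg Complex.normSq (hpt v)
        rw [map_mul, map_mul, Complex.normSq_ofReal] at hns
        have h2 : Complex.normSq (lam + 1 + Complex.I * k * v) = a ^ 2 + (lam.im + k * v) ^ 2 := by
          simp [Complex.normSq_apply, ha]; ring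
        have h3 : Complex.normSq m = m.re ^ 2 := by
          simp [Complex.normSq_apply, hmass_real]; ring
        rw [h2, h3, ← Complex.sq_norm] at hns
        nlinarith [hns]
      set φ : ℝ → ℝ := fun v => M v / (a ^ 2 + (lam.im + k * v) ^ 2) with hφ
      clear_value φ
      have hphi_eq : ∀ v : ℝ, ‖g v‖ ^ 2 / M v = m.re ^ 2 * φ v := by
        intro v
        simp only [hφ]
        have h4 := hsq v
        have h5 := hMpos v
        have h6 := hden v
        field_simp
        nlinarith [h4]
      have hφInt : Integrable φ := by
        have h7 : Integrable (fun v => (m.re ^ 2)⁻¹ * (‖g v‖ ^ 2 / M v)) :=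
          hgL2.const_mul _
        refine h7.congr (Filter.Eventually.of_forall fun v => ?_)
        show (m.re ^ 2)⁻¹ * (‖g v‖ ^ 2 / M v) = φ v
        rw [hphi_eq v]
        field_simp
      have hNφ : N = m.re ^ 2 * ∫ v, φ v := by
        rw [hNdef, integral_congr_ae (Filter.Eventually.of_forall hphi_eq), integral_const_mul]
      have hone : a * ∫ v, φ v = 1 := by
        have h9 : m.re ^ 2 ≠ 0 := pow_ne_zero _ h0
        have h8 : m.re ^ 2 * (a * ∫ v, φ v) = m.re ^ 2 * 1 := by
          linear_combination -hre - a * hNφ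
        exact mul_left_cancel₀ h9 h8
      have hφle : ∀ v, φ v ≤ M v / a ^ 2 := by
        intro v
        simp only [hφ]
        have hle : a ^ 2 ≤ a ^ 2 + (lam.im + k * v) ^ 2 := by
          nlinarith [sq_nonneg (lam.im + k * v)]
        exact div_le_div_of_nonneg_left (hMpos v).le (pow_pos ha0 2) hle
      have hbound : ∫ v, φ v ≤ 1 / a ^ 2 := by
        calc ∫ v, φ v ≤ ∫ v, M v / a ^ 2 := integral_mono hφInt (hMint.div_const _) hφle
          _ = 1 / a ^ 2 := by rw [integral_div, hMone]
      have haeq : a = 1 := by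
        have h15 : (1:ℝ) ≤ a * (1 / a ^ 2) := by
          calc (1 : ℝ) = a * ∫ v, φ v := hone.symm
            _ ≤ a * (1 / a ^ 2) := mul_le_mul_of_nonneg_left hbound ha0.le
        have h20 : a ^ 2 ≤ a := by
          calc a ^ 2 = a ^ 2 * 1 := (mul_one _).symm
            _ ≤ a ^ 2 * (a * (1 / a ^ 2)) := mul_le_mul_of_nonneg_left h15 (pow_pos ha0 2).le
            _ = a := by field_simp
        have h21 : a * a ≤ a * 1 := by
          rw [mul_one]
          calc a * a = a ^ 2 := by ring
            _ ≤ a := h20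
        exact le_antisymm ((mul_le_mul_iff_right₀ ha0).mp h21) ha1
      -- now a = 1, integral of φ is 1 = ∫ M, so M = φ everywhere
      have hφ1 : ∫ v, φ v = 1 := by
        rw [haeq, one_mul] at hone; exact hone
      have hf_nonneg : ∀ v, 0 ≤ M v - φ v := by
        intro v
        have := hφle v
        rw [haeq] at this
        simpa using this.trans_eq (by ring)
      have hf_int : Integrable (fun v => M v - φ v) := hMint.sub hφInt
      have hf_zero : ∫ v, (M v - φ v) = 0 := by
        rw [integral_sub hMint hφInt, hMone, hφ1]; ring
      have hMcont : Continuous M := by rw [hMdef]; fun_prop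
      have hφcont : Continuous φ := by
        rw [hφ]
        exact hMcont.div (by fun_prop) (fun v => (hden v).ne')
      have hf_cont : Continuous fun v => M v - φ v := hMcont.sub hφcont
      have hf_ae : (fun v => M v - φ v) =ᵐ[volume] (fun _ => (0:ℝ)) :=
        (integral_eq_zero_iff_of_nonneg hf_nonneg hf_int).mp hf_zero
      have hf_eq : (fun v => M v - φ v) = fun _ => (0:ℝ) :=
        (hf_cont.ae_eq_iff_eq volume continuous_const).mp hf_ae
      have him0 : lam.im = 0 := by
        have h11 := congrFun hf_eq 0
        simp only [hφ, sub_eq_zero] at h11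
        rw [eq_div_iff (hden 0).ne'] at h11
        rw [haeq] at h11
        have h13 : M 0 * (lam.im + k * 0) ^ 2 = 0 := by linear_combination h11
        have h14' : (lam.im + k * 0) ^ 2 = 0 := by
          rcases mul_eq_zero.mp h13 with h | h
          · exact absurd h (hMpos 0).ne'
          · exact h
        have h15' := (pow_eq_zero_iff two_ne_zero).mp h14'
        simpa using h15'
      have hre0 : lam.re = 0 := by simp only [ha] at haeq; linarith
      exact hlam (Complex.ext hre0 him0)
  refine ⟨hpart1, ⟨hge, hlt⟩, ?_⟩
  intro hk
  subst hk
  have hpt0 : ∀ v : ℝ, (lam + 1) * g v = m * (M v : ℂ) := by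
    intro v
    have := hpt v
    simpa using this
  have hmul : (lam + 1) * m = m := by
    have c1 : (lam + 1) * m = ∫ v, (lam + 1) * g v := by
      rw [hm, integral_const_mul]
    have c2 : (∫ v, (lam + 1) * g v) = ∫ v, m * ((M v : ℝ) : ℂ) :=
      integral_congr_ae (Filter.Eventually.of_forall hpt0)
    have c3 : (∫ v, m * ((M v : ℝ) : ℂ)) = m * ((∫ v, M v : ℝ) : ℂ) := by
      rw [integral_const_mul]
      congr 1
      exact integral_ofReal
    rw [c1, c2, c3, hMone]
    simp
  have hm0 : m = 0 := by
    have h13 : lam * m = 0 := by linear_combination hmul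
    exact (mul_eq_zero.mp h13).resolve_left hlam
  have hkey0 : (lam + 1) * (N : ℂ) = 0 := by
    rw [hm0] at key
    simpa using key.symm
  have h14 : lam + 1 = 0 := by
    rcases mul_eq_zero.mp hkey0 with h | h
    · exact h
    · exact absurd h (by exact_mod_cast hNne)
  linear_combination h14
end
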